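/- arXiv:1505.04806 — 2 statements merged into one kernel-verified Lean document; each statement's English description precedes it below -/
import Mathlib

section
/- Let k ≥ 1, let H be the hypercube digraph on {0,1}^k with edge weights y_i^j, and let m = (m_1,…,m_k) ∈ {0,1}^k. Then the generating polynomial of oriented spanning trees of H rooted at the vertex m equals (∏_{i=1}^k y_i^{m_i}) · ∏_{J ⊆ {1,…,k}, |J| ≥ 2} (Σ_{i ∈ J} (y_i^0 + y_i^1)). -/
open Classical Finset

noncomputable section

variable {V : Type*} {R : Type*} [CommRing R]

/-- An oriented spanning tree of the digraph `E` on `V`: `root` has outdegree 0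
(convention `out root = root`), every other vertex `v` has a unique outgoing edge
`(v, out v)` which is an edge of the graph, and iterating `out` from any vertex
reaches the root (no cycles). -/
structure SpTree [Fintype V] (E : V → V → Prop) where
  root : V
  out : V → V
  out_root : out root = root
  edge_mem : ∀ v, v ≠ root → E v (out v)
  reach : ∀ v, ∃ n, out^[n] v = root

theorem SpTree.ext' [Fintype V] {E : V → V → Prop} {a b : SpTree E}
    (h1 : a.root = b.root) (h2 : a.out = b.out) : a = b := by
  cases a; cases b; dsimp at h1 h2; subst h1; subst h2; rfl

noncomputable instance [Fintype V] (E : V → V → Prop) : Fintype (SpTree E) :=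
  Fintype.ofInjective (fun a => (a.root, a.out)) fun a b h =>
    SpTree.ext' (congrArg Prod.fst h) (congrArg Prod.snd h)

/-- An oriented forest of the digraph `E`, rooted in the set `U`. -/
structure SpForest [Fintype V] (E : V → V → Prop) (U : Finset V) where
  out : V → V
  out_root : ∀ v ∈ U, out v = v
  edge_mem : ∀ v, v ∉ U → E v (out v)
  reach : ∀ v, ∃ n, out^[n] v ∈ U

theorem SpForest.ext' [Fintype V] {E : V → V → Prop} {U : Finset V} {a b : SpForest E U}
    (h : a.out = b.out) : a = b := by
  cases a; cases b; dsimp at h; subst h; rfl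

noncomputable instance [Fintype V] (E : V → V → Prop) (U : Finset V) :
    Fintype (SpForest E U) :=
  Fintype.ofInjective SpForest.out fun _ _ h => SpForest.ext' h

/-- The adjacency relation of the tree graph `𝒯G`: there is an edge from `a` to `b`
if `b` is obtained from `a` by adding the edge `(a.root, b.root)` of `G` and deleting
the edge of `a` going out of `b.root`. -/
def TStep [Fintype V] (E : V → V → Prop) (a b : SpTree E) : Prop :=
  E a.root b.root ∧ a.root ≠ b.root ∧ b.out a.root = b.root ∧
    ∀ v, v ≠ a.root → v ≠ b.root → b.out v = a.out v

/-- The set `W` is strongly connected in the digraph `E` (for the induced subgraph). -/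
def SConn (E : V → V → Prop) (W : Set V) : Prop :=
  ∀ u ∈ W, ∀ v ∈ W, Relation.ReflTransGen (fun a b => E a b ∧ a ∈ W ∧ b ∈ W) u v

/-- Edge-weighted Laplacian matrix of the digraph `E`, with weight `x (v,w)` on the
edge from `v` to `w`. -/
def lapM [Fintype V] (E : V → V → Prop) (x : V × V → R) : Matrix V V R :=
  Matrix.of fun v w =>
    if v = w then -(∑ u ∈ univ.filter (fun u => E v u), x (v, u))
    else if E v w then x (v, w) else 0

/-- Schrödinger operator `L = Q + Y` with potential `y`. -/
def schrM [Fintype V] (E : V → V → Prop) (x : V × V → R) (y : V → R) : Matrix V V R :=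
  lapM E x + Matrix.diagonal y

/-- Weighted adjacency matrix. -/
def adjM [Fintype V] (E : V → V → Prop) (x : V × V → R) : Matrix V V R :=
  Matrix.of fun v w => if E v w then x (v, w) else 0

/-- Submatrix keeping rows and columns indexed by `W`. -/
def subM [Fintype V] (M : Matrix V V R) (W : Finset V) :
    Matrix {v // v ∈ W} {v // v ∈ W} R :=
  M.submatrix Subtype.val Subtype.val

/-- The lifted edge weights on the tree graph: the edge from `a` to `b` in `𝒯G`
carries the weight of the edge of `G` from `a.root` to `b.root`. -/
def xT [Fintype V] (E : V → V → Prop) (x : V × V → R) : SpTree E × SpTree E → R :=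
  fun p => x (p.1.root, p.2.root)

/-- The lifted potential on the tree graph. -/
def yT [Fintype V] (E : V → V → Prop) (y : V → R) : SpTree E → R :=
  fun a => y a.root

/-- Weight `π_𝐚` of a spanning tree: product of its edge weights. -/
def treeWt [Fintype V] {E : V → V → Prop} (x : V × V → R) (a : SpTree E) : R :=
  ∏ v ∈ univ.filter (fun v => v ≠ a.root), x (v, a.out v)

/-- Generating polynomial of the oriented spanning trees of `E`. -/
def FGpoly [Fintype V] (E : V → V → Prop) (x : V × V → R) : R :=
  ∑ a : SpTree E, treeWt x a

/-- Weight `π_𝐟` of a forest: product of its edge weights. -/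
def forestWt [Fintype V] {E : V → V → Prop} {U : Finset V} (x : V × V → R)
    (f : SpForest E U) : R :=
  ∏ v ∈ univ.filter (fun v => v ∉ U), x (v, f.out v)

/-- Generating polynomial `Ψ_U` of the oriented forests of `E` rooted in `U`. -/
def PsiF [Fintype V] (E : V → V → Prop) (U : Finset V) (x : V × V → R) : R :=
  ∑ f : SpForest E U, forestWt x f

/-- Generating polynomial of the oriented spanning trees of the tree graph `𝒯G`. -/
def FTGpoly [Fintype V] (E : V → V → Prop) (x : V × V → R) : R :=
  FGpoly (TStep E) (xT E x)

/-- The polynomial ring `ℂ[x_e (e ∈ V × V), y_v (v ∈ V)]`. -/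
abbrev Rng (V : Type*) := MvPolynomial ((V × V) ⊕ V) ℂ

/-- The edge variable `x_e`. -/
def xv {V : Type*} : V × V → Rng V := fun e => MvPolynomial.X (Sum.inl e)

/-- The vertex variable `y_v`. -/
def yv {V : Type*} : V → Rng V := fun v => MvPolynomial.X (Sum.inr v)

/-! ### The exploration algorithm -/

/-- The state of the exploration algorithm: a set `A` of explored vertices, a FIFO
list `Lq` of edges to be examined, a reservoir `F` of edges, and the set `Er` of
erased vertices. -/
structure ExpState (V : Type*) where
  A : Finset V
  Lq : List (V × V)
  F : Finset (V × V)
  Er : Finset V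

/-- The list of the edges of `S` with target `w`, ordered by increasing source. -/
def sortedTo (ord : LinearOrder V) (S : Finset (V × V)) (w : V) : List (V × V) :=
  letI := ord
  (((S.filter (fun f => f.2 = w)).image Prod.fst).sort (· ≤ ·)).map fun u => (u, w)

/-- The edge `e` belongs to the tree `a`. -/
def inTree [Fintype V] {E : V → V → Prop} (a : SpTree E) (e : V × V) : Prop :=
  e.1 ≠ a.root ∧ a.out e.1 = e.2

/-- One iteration of the exploration algorithm: pick the first edge `e` of the list,
with source `w`; if `e` belongs to the tree then add `w` to `A`, delete all edges with
source `w` from the list, and append the edges of `F` with target `w` by increasing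
source; otherwise erase `w`, deleting all edges with source or target `w` from the
list and from `F`. -/
def expStep [Fintype V] {E : V → V → Prop} (ord : LinearOrder V) (a : SpTree E)
    (s : ExpState V) : ExpState V :=
  match s.Lq with
  | [] => s
  | e :: rest =>
    if inTree a e then
      { A := insert e.1 s.A
        Lq := rest.filter (fun f => decide (f.1 ≠ e.1)) ++ sortedTo ord s.F e.1
        F := s.F
        Er := s.Er }
    else
      { A := s.A
        Lq := rest.filter (fun f => decide (f.1 ≠ e.1 ∧ f.2 ≠ e.1))
        F := s.F.filter (fun f => f.1 ≠ e.1 ∧ f.2 ≠ e.1)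
        Er := insert e.1 s.Er }

/-- The initial state of the exploration algorithm run on a tree rooted at `v`:
`A = {v}`, the list consists of the edges with target `v` by increasing source, and
`F` is the set of edges with source `≠ v`. -/
def expInit [Fintype V] {E : V → V → Prop} (ord : LinearOrder V) (a : SpTree E) :
    ExpState V :=
  letI := ord
  { A := {a.root}
    Lq := ((univ.filter (fun u => E u a.root)).sort (· ≤ ·)).map fun u => (u, a.root)
    F := univ.filter fun f : V × V => E f.1 f.2 ∧ f.1 ≠ a.root
    Er := (∅ : Finset V) }

/-- The final state of the exploration algorithm (the number of iterations below is
large enough for the list to be exhausted, after which the state no longer moves). -/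
def expRun [Fintype V] {E : V → V → Prop} (ord : LinearOrder V) (a : SpTree E) :
    ExpState V :=
  (expStep ord a)^[2 * Fintype.card (V × V) + 1] (expInit ord a)

/-- The set `φ(𝐚)` of explored vertices. -/
def expPhi [Fintype V] {E : V → V → Prop} (ord : LinearOrder V) (a : SpTree E) : Finset V :=
  (expRun ord a).A

/-- The set of erased vertices. -/
def expEr [Fintype V] {E : V → V → Prop} (ord : LinearOrder V) (a : SpTree E) : Finset V :=
  (expRun ord a).Er

/-- The set `ψ(𝐚)`: the strongly connected component of the root in the subgraph
induced on `φ(𝐚)`. -/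
def expPsi [Fintype V] {E : V → V → Prop} (ord : LinearOrder V) (a : SpTree E) : Finset V :=
  univ.filter fun u => u ∈ expPhi ord a ∧
    Relation.ReflTransGen
      (fun p q => E p q ∧ p ∈ expPhi ord a ∧ q ∈ expPhi ord a) a.root u ∧
    Relation.ReflTransGen
      (fun p q => E p q ∧ p ∈ expPhi ord a ∧ q ∈ expPhi ord a) u a.root

/-- The multiplicity `m(W, w)`: the number of oriented spanning trees `𝐚` rooted at
`w` with `ψ(𝐚) = W`. -/
def multCount [Fintype V] (E : V → V → Prop) (ord : LinearOrder V) (W : Finset V)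
    (w : V) : ℕ :=
  Nat.card {a : SpTree E // a.root = w ∧ expPsi ord a = W}

/-- The multiplicity `m(W)` (the common value of the `m(W, w)`, `w ∈ W`). -/
def multW [Fintype V] (E : V → V → Prop) (ord : LinearOrder V) (W : Finset V) : ℕ :=
  letI := ord
  if h : W.Nonempty then multCount E ord W (W.min' h) else 0

end
/-- Vertices of the hypercube `{0,1}^k` (coordinate value `j ∈ {0,1}` is a `Bool`). -/
abbrev HV (k : ℕ) := Fin k → Bool

/-- The hypercube digraph: an edge between two vertices differing in exactly one
coordinate (in each direction). -/
def HE (k : ℕ) : HV k → HV k → Prop := fun u v =>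
  (univ.filter (fun i => u i ≠ v i)).card = 1

/-- The ring `ℂ[y_i^j (1 ≤ i ≤ k, j ∈ {0,1})]`. -/
abbrev HR (k : ℕ) := MvPolynomial (Fin k × Bool) ℂ

/-- The edge-weight variable `y_i^j`. -/
noncomputable def hy (k : ℕ) (i : Fin k) (j : Bool) : HR k := MvPolynomial.X (i, j)

/-- The weight of an edge of the hypercube: the edge whose target has `i`-th
coordinate equal to `j` (where `i` is the unique coordinate at which the two
endpoints differ) carries the weight `y_i^j`. -/
noncomputable def hwt (k : ℕ) : HV k × HV k → HR k := fun e =>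
  ∏ i ∈ univ.filter (fun i => e.1 i ≠ e.2 i), hy k i (e.2 i)

set_option linter.unusedSectionVars false

namespace MT
open Equiv

variable {V : Type*} [Fintype V] [DecidableEq V] {R : Type*} [CommRing R]

variable (r : V)

def ext (f : {v : V // v ≠ r} → V) : V → V := fun v => if h : v = r then r else f ⟨v, h⟩

lemma ext_coe (f : {v : V // v ≠ r} → V) (i : {v : V // v ≠ r}) : ext r f ↑i = f i :=
  dif_neg i.2

lemma ext_r (f : {v : V // v ≠ r} → V) : ext r f r = r := dif_pos rfl

def CycleFree (f : {v : V // v ≠ r} → V) : Prop := ∀ v, ∃ n, (ext r f)^[n] v = r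

variable (A : V → V → R)

def lap : Matrix {v : V // v ≠ r} {v : V // v ≠ r} R :=
  Matrix.of fun i j => if i = j then ∑ u, A i u else - A (i : V) (j : V)

def c (σ : Perm {v : V // v ≠ r}) (i : {v : V // v ≠ r}) (u : V) : R :=
  if σ i = i then A i u else if u = ↑(σ i) then - A (i : V) u else 0

lemma lap_eq_sum_c (σ : Perm {v : V // v ≠ r}) (i : {v : V // v ≠ r}) :
    lap r A i (σ i) = ∑ u, c r A σ i u := by
  by_cases h : σ i = i
  · simp [lap, c, h]
  · have h2 : ¬ i = σ i := fun e => h e.symm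
    rw [show (∑ u, c r A σ i u) = ∑ u, if u = ↑(σ i) then - A (i : V) u else 0 by
      refine Finset.sum_congr rfl fun u _ => ?_; simp [c, h]]
    rw [Finset.sum_ite_eq' univ (↑(σ i) : V) (fun u => - A (i : V) u)]
    simp [lap, h2]

lemma prod_c_of_not_mem (f : {v : V // v ≠ r} → V) (σ : Perm {v : V // v ≠ r})
    (hσ : ¬ ∀ i, σ i ≠ i → f i = ↑(σ i)) : ∏ i, c r A σ i (f i) = 0 := by
  push_neg at hσ
  obtain ⟨i, hi, hfi⟩ := hσ
  refine Finset.prod_eq_zero (mem_univ i) ?_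
  simp [c, hi, hfi]

lemma prod_c_of_mem (f : {v : V // v ≠ r} → V) (σ : Perm {v : V // v ≠ r})
    (hσ : ∀ i, σ i ≠ i → f i = ↑(σ i)) :
    ∏ i, c r A σ i (f i) = (-1 : R) ^ σ.support.card * ∏ i, A i.1 (f i) := by
  rw [← Finset.prod_mul_prod_compl σ.support (fun i => c r A σ i (f i)),
      ← Finset.prod_mul_prod_compl σ.support (fun i => A i.1 (f i))]
  have h1 : ∀ i ∈ σ.support, c r A σ i (f i) = -1 * A i.1 (f i) := by
    intro i hi
    have hne := Perm.mem_support.mp hi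
    simp [c, hne, hσ i hne]
  have h2 : ∀ i ∈ σ.supportᶜ, c r A σ i (f i) = A i.1 (f i) := by
    intro i hi
    have := Finset.mem_compl.mp hi
    rw [Perm.notMem_support] at this
    simp [c, this]
  rw [Finset.prod_congr rfl h1, Finset.prod_congr rfl h2, Finset.prod_mul_distrib,
    Finset.prod_const]
  ring

end MT

namespace MT2
open MT
variable {V : Type*} [Fintype V] [DecidableEq V] {R : Type*} [CommRing R]
variable {r : V}

lemma exists_periodic {f : {v : V // v ≠ r} → V} (hnc : ¬ CycleFree r f) :
    ∃ (i0 : {v : V // v ≠ r}) (d0 : ℕ), 0 < d0 ∧ (ext r f)^[d0] ↑i0 = ↑i0 := by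
  rw [CycleFree] at hnc
  push_neg at hnc
  obtain ⟨v, hv⟩ := hnc
  set F := ext r f with hF
  have hcard : Fintype.card V < Fintype.card (Fin (Fintype.card V + 1)) := by simp
  obtain ⟨x, y, hxy, hexy⟩ := Fintype.exists_ne_map_eq_of_card_lt
    (fun n : Fin (Fintype.card V + 1) => F^[n] v) hcard
  wlog hlt : (x : ℕ) < (y : ℕ) generalizing x y
  · refine this y x hxy.symm hexy.symm ?_
    rcases lt_or_gt_of_ne (fun h : (x:ℕ) = (y:ℕ) => hxy (Fin.ext h)) with h | h
    · exact absurd h hlt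
    · exact h
  refine ⟨⟨F^[x] v, hv x⟩, (y : ℕ) - (x : ℕ), by omega, ?_⟩
  simp only
  rw [← Function.iterate_add_apply, Nat.sub_add_cancel hlt.le]
  exact hexy.symm

end MT2

namespace MT3
open MT MT2 Equiv
variable {V : Type*} [Fintype V] [DecidableEq V] {R : Type*} [CommRing R]
variable {r : V}

section Cancel

variable {f : {v : V // v ≠ r} → V} {i0 : {v : V // v ≠ r}} {d0 : ℕ}

/-- the orbit of `i0` under (the extension of) `f`. -/
noncomputable def orbC (f : {v : V // v ≠ r} → V) (i0 : {v : V // v ≠ r}) : Finset {v : V // v ≠ r} :=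
  univ.filter (fun j => ∃ n, (ext r f)^[n] ↑i0 = ↑j)

lemma iter_ne_r (hd0 : 0 < d0) (hper : (ext r f)^[d0] ↑i0 = ↑i0) (n : ℕ) :
    (ext r f)^[n] ↑i0 ≠ r := by
  intro hn
  have hmul : ∀ m, (ext r f)^[d0 * m] ↑i0 = ↑i0 := by
    intro m
    rw [Function.iterate_mul]
    exact Function.iterate_fixed hper m
  have h1 : n < d0 * (n + 1) := by
    calc n < n + 1 := Nat.lt_succ_self n
    _ ≤ d0 * (n + 1) := Nat.le_mul_of_pos_left _ hd0
  have h2 := hmul (n + 1)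
  rw [show d0 * (n + 1) = (d0 * (n + 1) - n) + n from (Nat.sub_add_cancel h1.le).symm,
    Function.iterate_add_apply, hn, Function.iterate_fixed (ext_r r f)] at h2
  exact i0.2 h2.symm

lemma mem_orbC_self : i0 ∈ orbC f i0 := by
  simp only [orbC, mem_filter, mem_univ, true_and]
  exact ⟨0, rfl⟩

lemma f_ne_r_of_mem_orbC (hd0 : 0 < d0) (hper : (ext r f)^[d0] ↑i0 = ↑i0)
    {j : {v : V // v ≠ r}} (hj : j ∈ orbC f i0) : f j ≠ r := by
  simp only [orbC, mem_filter, mem_univ, true_and] at hj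
  obtain ⟨n, hn⟩ := hj
  have : (ext r f)^[n + 1] ↑i0 = f j := by
    rw [Function.iterate_succ_apply', hn, ext_coe]
  rw [← this]
  exact iter_ne_r hd0 hper (n + 1)

lemma orbC_per (hd0 : 0 < d0) (hper : (ext r f)^[d0] ↑i0 = ↑i0)
    {j : {v : V // v ≠ r}} (hj : j ∈ orbC f i0) : (ext r f)^[d0] ↑j = ↑j := by
  simp only [orbC, mem_filter, mem_univ, true_and] at hj
  obtain ⟨n, hn⟩ := hj
  rw [← hn, ← Function.iterate_add_apply, add_comm, Function.iterate_add_apply, hper]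

/-- the successor function on the orbit, identity elsewhere. -/
noncomputable def tfun (f : {v : V // v ≠ r} → V) (i0 : {v : V // v ≠ r}) :
    {v : V // v ≠ r} → {v : V // v ≠ r} :=
  fun j => if h : j ∈ orbC f i0 ∧ f j ≠ r then ⟨f j, h.2⟩ else j

lemma tfun_of_mem (hd0 : 0 < d0) (hper : (ext r f)^[d0] ↑i0 = ↑i0)
    {j : {v : V // v ≠ r}} (hj : j ∈ orbC f i0) :
    (tfun f i0 j : V) = f j := by
  rw [tfun, dif_pos ⟨hj, f_ne_r_of_mem_orbC hd0 hper hj⟩]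

lemma tfun_of_not_mem {j : {v : V // v ≠ r}} (hj : j ∉ orbC f i0) : tfun f i0 j = j := by
  rw [tfun, dif_neg (fun h => hj h.1)]

lemma tfun_mem (hd0 : 0 < d0) (hper : (ext r f)^[d0] ↑i0 = ↑i0)
    {j : {v : V // v ≠ r}} (hj : j ∈ orbC f i0) : tfun f i0 j ∈ orbC f i0 := by
  simp only [orbC, mem_filter, mem_univ, true_and] at hj ⊢
  obtain ⟨n, hn⟩ := hj
  exact ⟨n + 1, by rw [Function.iterate_succ_apply', hn, ext_coe,
    tfun_of_mem hd0 hper (by simp only [orbC, mem_filter, mem_univ, true_and]; exact ⟨n, hn⟩)]⟩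

lemma tfun_inj (hd0 : 0 < d0) (hper : (ext r f)^[d0] ↑i0 = ↑i0) :
    Function.Injective (tfun f i0) := by
  intro a b hab
  by_cases ha : a ∈ orbC f i0 <;> by_cases hb : b ∈ orbC f i0
  · -- both in orbit
    have hfa : f a = f b := by
      have := congrArg (Subtype.val) hab
      rwa [tfun_of_mem hd0 hper ha, tfun_of_mem hd0 hper hb] at this
    have key : ∀ x : {v : V // v ≠ r}, x ∈ orbC f i0 →
        (ext r f)^[d0 - 1] (f x) = ↑x := by
      intro x hx
      have := orbC_per hd0 hper hx
      rwa [show d0 = (d0 - 1) + 1 from (Nat.sub_add_cancel hd0).symm,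
        Function.iterate_succ_apply, ext_coe] at this
    have : (a : V) = (b : V) := by rw [← key a ha, ← key b hb, hfa]
    exact Subtype.coe_injective this
  · exact absurd (hab ▸ tfun_mem hd0 hper ha) (by rw [tfun_of_not_mem hb]; exact hb)
  · rw [tfun_of_not_mem ha] at hab
    exact absurd (by rw [hab]; exact tfun_mem hd0 hper hb) ha
  · rwa [tfun_of_not_mem ha, tfun_of_not_mem hb] at hab

end Cancel
end MT3

namespace MT3B
open MT MT2 MT3 Equiv
open scoped Classical
variable {V : Type*} [Fintype V] [DecidableEq V] {R : Type*} [CommRing R]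
variable {r : V}
variable {f : {v : V // v ≠ r} → V} {i0 : {v : V // v ≠ r}} {d0 : ℕ}

/-- the cycle permutation -/
noncomputable def tperm (f : {v : V // v ≠ r} → V) (i0 : {v : V // v ≠ r})
    (hd0 : 0 < d0) (hper : (ext r f)^[d0] ↑i0 = ↑i0) : Perm {v : V // v ≠ r} :=
  Equiv.ofBijective (tfun f i0) ((Finite.injective_iff_bijective).1 (tfun_inj hd0 hper))

variable (hd0 : 0 < d0) (hper : (ext r f)^[d0] ↑i0 = ↑i0)

lemma tperm_apply (j : {v : V // v ≠ r}) : tperm f i0 hd0 hper j = tfun f i0 j := rfl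

lemma tperm_support (hnf : ∀ i, f i ≠ ↑i) : (tperm f i0 hd0 hper).support = orbC f i0 := by
  ext j
  rw [Perm.mem_support, tperm_apply]
  constructor
  · intro h
    by_contra hj
    exact h (tfun_of_not_mem hj)
  · intro hj he
    have := tfun_of_mem hd0 hper hj
    rw [he] at this
    exact hnf j this.symm

lemma tperm_iter (n : ℕ) : ((tperm f i0 hd0 hper)^[n] i0 : V) = (ext r f)^[n] ↑i0 ∧
    (tperm f i0 hd0 hper)^[n] i0 ∈ orbC f i0 := by
  induction n with
  | zero => exact ⟨rfl, mem_orbC_self⟩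
  | succ n ih =>
    obtain ⟨h1, h2⟩ := ih
    constructor
    · rw [Function.iterate_succ_apply', Function.iterate_succ_apply', tperm_apply,
        tfun_of_mem hd0 hper h2, ← ext_coe r f, h1]
    · rw [Function.iterate_succ_apply', tperm_apply]
      exact tfun_mem hd0 hper h2

lemma orbC_eq_iter {j : {v : V // v ≠ r}} (hj : j ∈ orbC f i0) :
    ∃ n, (tperm f i0 hd0 hper)^[n] i0 = j := by
  simp only [orbC, mem_filter, mem_univ, true_and] at hj
  obtain ⟨n, hn⟩ := hj
  exact ⟨n, Subtype.ext (by rw [← hn]; exact (tperm_iter hd0 hper n).1)⟩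

lemma tperm_iter_d0 : (tperm f i0 hd0 hper)^[d0] i0 = i0 :=
  Subtype.ext (by rw [← hper]; exact (tperm_iter hd0 hper d0).1)

lemma tperm_isCycle (hnf : ∀ i, f i ≠ ↑i) : (tperm f i0 hd0 hper).IsCycle := by
  refine ⟨i0, ?_, ?_⟩
  · rw [tperm_apply]
    intro h
    have := tfun_of_mem hd0 hper (mem_orbC_self (i0 := i0))
    rw [h] at this
    exact hnf i0 this.symm
  · intro y hy
    have hy' : y ∈ orbC f i0 := by
      rw [← tperm_support hd0 hper hnf]
      exact Perm.mem_support.mpr hy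
    obtain ⟨n, hn⟩ := orbC_eq_iter hd0 hper hy'
    exact ⟨(n : ℤ), by rw [zpow_natCast, Perm.coe_pow]; exact hn⟩

lemma tperm_sign (hnf : ∀ i, f i ≠ ↑i) : Perm.sign (tperm f i0 hd0 hper) = -(-1) ^ (orbC f i0).card := by
  rw [(tperm_isCycle hd0 hper hnf).sign, tperm_support hd0 hper hnf]

end MT3B

namespace MT3C
open MT MT2 MT3 MT3B Equiv
open scoped Classical
variable {V : Type*} [Fintype V] [DecidableEq V] {R : Type*} [CommRing R]
variable {r : V}
variable {f : {v : V // v ≠ r} → V} {i0 : {v : V // v ≠ r}} {d0 : ℕ}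
variable (hd0 : 0 < d0) (hper : (ext r f)^[d0] ↑i0 = ↑i0)
include hd0 hper

lemma step_supp {σ : Perm {v : V // v ≠ r}} (hσ : ∀ i, σ i ≠ i → f i = ↑(σ i))
    {x : {v : V // v ≠ r}} (hx : x ∈ orbC f i0) (hxs : x ∈ σ.support) :
    σ x = tperm f i0 hd0 hper x ∧ σ x ∈ σ.support := by
  have h1 : f x = ↑(σ x) := hσ x (Perm.mem_support.mp hxs)
  have h2 : σ x = tperm f i0 hd0 hper x := by
    refine Subtype.ext ?_
    rw [tperm_apply, tfun_of_mem hd0 hper hx, h1]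
  exact ⟨h2, Perm.apply_mem_support.mpr hxs⟩

lemma subset_supp {σ : Perm {v : V // v ≠ r}} (hσ : ∀ i, σ i ≠ i → f i = ↑(σ i))
    (h : i0 ∈ σ.support) : orbC f i0 ⊆ σ.support := by
  have key : ∀ n, (tperm f i0 hd0 hper)^[n] i0 ∈ σ.support := by
    intro n
    induction n with
    | zero => exact h
    | succ n ih =>
      rw [Function.iterate_succ_apply',
        ← (step_supp hd0 hper hσ (tperm_iter hd0 hper n).2 ih).1]
      exact (step_supp hd0 hper hσ (tperm_iter hd0 hper n).2 ih).2
  intro j hj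
  obtain ⟨n, hn⟩ := orbC_eq_iter hd0 hper hj
  exact hn ▸ key n

lemma disj_supp {σ : Perm {v : V // v ≠ r}} (hσ : ∀ i, σ i ≠ i → f i = ↑(σ i))
    (h : i0 ∉ σ.support) : ∀ j ∈ orbC f i0, j ∉ σ.support := by
  intro j hj hjs
  have key : ∀ m, (tperm f i0 hd0 hper)^[m] j ∈ orbC f i0 ∧
      (tperm f i0 hd0 hper)^[m] j ∈ σ.support := by
    intro m
    induction m with
    | zero => exact ⟨hj, hjs⟩
    | succ m ih =>
      constructor
      · rw [Function.iterate_succ_apply', tperm_apply]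
        exact tfun_mem hd0 hper ih.1
      · rw [Function.iterate_succ_apply', ← (step_supp hd0 hper hσ ih.1 ih.2).1]
        exact (step_supp hd0 hper hσ ih.1 ih.2).2
  obtain ⟨n, hn⟩ := orbC_eq_iter hd0 hper hj
  have hmul : ∀ k, (tperm f i0 hd0 hper)^[d0 * k] i0 = i0 := by
    intro k
    rw [Function.iterate_mul]
    exact Function.iterate_fixed (tperm_iter_d0 hd0 hper) k
  have h1 : n ≤ d0 * (n + 1) := by
    calc n ≤ n + 1 := Nat.le_succ n
    _ ≤ d0 * (n + 1) := Nat.le_mul_of_pos_left _ hd0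
  have h2 : (tperm f i0 hd0 hper)^[d0 * (n + 1) - n] j = i0 := by
    rw [← hn, ← Function.iterate_add_apply, Nat.sub_add_cancel h1, hmul]
  exact h ((h2 ▸ (key (d0 * (n + 1) - n)).2))

end MT3C

namespace MT4
open MT MT2 MT3 MT3B MT3C Equiv
open scoped Classical
variable {V : Type*} [Fintype V] [DecidableEq V] {R : Type*} [CommRing R]
variable {r : V}
variable {f : {v : V // v ≠ r} → V} {i0 : {v : V // v ≠ r}} {d0 : ℕ}
variable (hd0 : 0 < d0) (hper : (ext r f)^[d0] ↑i0 = ↑i0)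
include hd0 hper

lemma cancel_sum (A : V → V → R) (hnf : ∀ i : {v : V // v ≠ r}, f i ≠ ↑i) :
    ∑ σ ∈ univ.filter (fun σ : Perm {v : V // v ≠ r} => ∀ i, σ i ≠ i → f i = ↑(σ i)),
      ((Perm.sign σ : ℤ) : R) * ∏ i, c r A σ i (f i) = 0 := by
  set τ := tperm f i0 hd0 hper with hτdef
  have hsuppτ : τ.support = orbC f i0 := tperm_support hd0 hper hnf
  have hsignτ : ((Perm.sign τ : ℤ) : R) = -(-1 : R) ^ (orbC f i0).card := by
    rw [tperm_sign hd0 hper hnf]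
    push_cast
    ring
  set cc := (orbC f i0).card with hcc
  -- dichotomy for σ in the filter set
  have dich : ∀ σ : Perm {v : V // v ≠ r}, (∀ i, σ i ≠ i → f i = ↑(σ i)) →
      ¬ (orbC f i0 ⊆ σ.support) → ∀ j ∈ orbC f i0, j ∉ σ.support := by
    intro σ hσ hns
    by_cases h : i0 ∈ σ.support
    · exact absurd (subset_supp hd0 hper hσ h) hns
    · exact disj_supp hd0 hper hσ h
  -- facts in the "add" case
  have addF : ∀ σ : Perm {v : V // v ≠ r}, (∀ i, σ i ≠ i → f i = ↑(σ i)) →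
      (∀ j ∈ orbC f i0, j ∉ σ.support) →
      (∀ i, (σ * τ) i ≠ i → f i = ↑((σ * τ) i)) ∧
      (σ * τ).support = σ.support ∪ orbC f i0 ∧
      (σ * τ).support.card = σ.support.card + cc := by
    intro σ hσ hdisj
    have hd : σ.Disjoint τ := by
      intro x
      by_cases hx : x ∈ orbC f i0
      · exact Or.inl (Perm.notMem_support.mp (hdisj x hx))
      · exact Or.inr (by rw [hτdef, tperm_apply, tfun_of_not_mem hx])
    have hsupp : (σ * τ).support = σ.support ∪ orbC f i0 := by
      rw [hd.support_mul, hsuppτ]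
    have hdisjF : Disjoint σ.support (orbC f i0) :=
      Finset.disjoint_left.mpr (fun a ha ha' => hdisj a ha' ha)
    refine ⟨?_, hsupp, by rw [hsupp, Finset.card_union_of_disjoint hdisjF]⟩
    intro x hx
    by_cases hxo : x ∈ orbC f i0
    · have h1 : τ x ∈ orbC f i0 := by
        rw [hτdef, tperm_apply]; exact tfun_mem hd0 hper hxo
      have h2 : (σ * τ) x = τ x := by
        rw [Perm.mul_apply, Perm.notMem_support.mp (hdisj _ h1)]
      rw [h2, hτdef, tperm_apply, tfun_of_mem hd0 hper hxo]
    · have h2 : (σ * τ) x = σ x := by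
        rw [Perm.mul_apply, hτdef, tperm_apply, tfun_of_not_mem hxo]
      rw [h2] at hx ⊢
      exact hσ x hx
  -- facts in the "remove" case
  have remF : ∀ σ : Perm {v : V // v ≠ r}, (∀ i, σ i ≠ i → f i = ↑(σ i)) →
      (orbC f i0 ⊆ σ.support) →
      (∀ i, (σ * τ⁻¹) i ≠ i → f i = ↑((σ * τ⁻¹) i)) ∧
      (σ * τ⁻¹).support = σ.support \ orbC f i0 ∧
      (σ * τ⁻¹).support.card + cc = σ.support.card := by
    intro σ hσ hsub
    have b0 : ∀ j ∈ orbC f i0, σ j = τ j := by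
      intro j hj
      refine Subtype.ext ?_
      rw [← hσ j (Perm.mem_support.mp (hsub hj)), hτdef, tperm_apply,
        tfun_of_mem hd0 hper hj]
    have b1 : ∀ x ∈ orbC f i0, τ⁻¹ x ∈ orbC f i0 := by
      intro x hx
      by_contra hxc
      have : τ (τ⁻¹ x) = τ⁻¹ x := by
        rw [hτdef, tperm_apply, tfun_of_not_mem hxc]
      rw [← Perm.mul_apply, mul_inv_cancel, Perm.one_apply] at this
      rw [this] at hx
      exact hxc hx
    have b2 : ∀ x ∈ orbC f i0, (σ * τ⁻¹) x = x := by
      intro x hx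
      rw [Perm.mul_apply, b0 _ (b1 x hx), ← Perm.mul_apply, mul_inv_cancel, Perm.one_apply]
    have b3 : ∀ x, x ∉ orbC f i0 → (σ * τ⁻¹) x = σ x := by
      intro x hx
      have hfix : τ⁻¹ x = x := Perm.notMem_support.mp (by rwa [Perm.support_inv, hsuppτ])
      rw [Perm.mul_apply, hfix]
    have b4 : (σ * τ⁻¹).support = σ.support \ orbC f i0 := by
      ext x
      by_cases hx : x ∈ orbC f i0
      · simp [Perm.mem_support, b2 x hx, hx]
      · simp [Perm.mem_support, b3 x hx, hx]
    refine ⟨?_, b4, ?_⟩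
    · intro x hx
      by_cases hxo : x ∈ orbC f i0
      · exact absurd (b2 x hxo) hx
      · rw [b3 x hxo] at hx ⊢
        exact hσ x hx
    · rw [b4, Finset.card_sdiff_of_subset hsub, ← hcc, Nat.sub_add_cancel (Finset.card_le_card hsub)]
  -- the involution
  refine Finset.sum_involution
    (fun σ _ => if orbC f i0 ⊆ σ.support then σ * τ⁻¹ else σ * τ) ?_ ?_ ?_ ?_
  · -- cancellation
    intro σ ha
    have hσ := (Finset.mem_filter.mp ha).2
    by_cases hc : orbC f i0 ⊆ σ.support
    · obtain ⟨hg1, _, hg3⟩ := remF σ hσ hc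
      rw [if_pos hc, prod_c_of_mem r A f σ hσ, prod_c_of_mem r A f _ hg1]
      have hsg : ((Perm.sign (σ * τ⁻¹) : ℤ) : R) = ((Perm.sign σ : ℤ) : R) * ((Perm.sign τ : ℤ) : R) := by
        rw [Perm.sign_mul, Perm.sign_inv]
        push_cast
        ring
      have hpow : (-1 : R) ^ σ.support.card = (-1 : R) ^ (σ * τ⁻¹).support.card * (-1 : R) ^ cc := by
        rw [← pow_add, hg3]
      rw [hsg, hsignτ, hpow]
      ring
    · have hdisj := dich σ hσ hc
      obtain ⟨hg1, _, hg3⟩ := addF σ hσ hdisj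
      rw [if_neg hc, prod_c_of_mem r A f σ hσ, prod_c_of_mem r A f _ hg1]
      have hsg : ((Perm.sign (σ * τ) : ℤ) : R) = ((Perm.sign σ : ℤ) : R) * ((Perm.sign τ : ℤ) : R) := by
        rw [Perm.sign_mul]
        push_cast
        ring
      rw [hsg, hsignτ, hg3, pow_add]
      have sq : ((-1 : R) ^ cc) * ((-1 : R) ^ cc) = 1 := by
        rw [← pow_add, ← two_mul, pow_mul]
        norm_num
      linear_combination (-(((Perm.sign σ : ℤ) : R) * (-1 : R) ^ σ.support.card *
        ∏ i : {v : V // v ≠ r}, A i.1 (f i))) * sq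
  · -- g σ ≠ σ when term nonzero
    intro σ ha _
    have hσ := (Finset.mem_filter.mp ha).2
    by_cases hc : orbC f i0 ⊆ σ.support
    · rw [if_pos hc]
      intro he
      have h1 : i0 ∈ σ.support := hc mem_orbC_self
      have h2 : i0 ∉ (σ * τ⁻¹).support := by
        rw [(remF σ hσ hc).2.1]
        simp [mem_orbC_self]
      rw [he] at h2
      exact h2 h1
    · rw [if_neg hc]
      intro he
      have h1 : i0 ∉ σ.support := dich σ hσ hc i0 mem_orbC_self
      have h2 : i0 ∈ (σ * τ).support := by
        rw [(addF σ hσ (dich σ hσ hc)).2.1]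
        exact Finset.mem_union_right _ mem_orbC_self
      rw [he] at h2
      exact h1 h2
  · -- g σ in the set
    intro σ ha
    have hσ := (Finset.mem_filter.mp ha).2
    by_cases hc : orbC f i0 ⊆ σ.support
    · rw [if_pos hc]
      exact Finset.mem_filter.mpr ⟨mem_univ _, (remF σ hσ hc).1⟩
    · rw [if_neg hc]
      exact Finset.mem_filter.mpr ⟨mem_univ _, (addF σ hσ (dich σ hσ hc)).1⟩
  · -- involutive
    intro σ ha
    have hσ := (Finset.mem_filter.mp ha).2
    by_cases hc : orbC f i0 ⊆ σ.support
    · rw [if_pos hc]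
      have h2 : ¬ (orbC f i0 ⊆ (σ * τ⁻¹).support) := by
        rw [(remF σ hσ hc).2.1]
        intro hsub
        have := hsub mem_orbC_self
        simp [mem_orbC_self] at this
      rw [if_neg h2, inv_mul_cancel_right]
    · rw [if_neg hc]
      have h2 : orbC f i0 ⊆ (σ * τ).support := by
        rw [(addF σ hσ (dich σ hσ hc)).2.1]
        exact Finset.subset_union_right
      rw [if_pos h2, mul_inv_cancel_right]

end MT4

namespace MT5
open MT MT2 MT3 MT3B MT3C MT4 Equiv
open scoped Classical
variable {V : Type*} [Fintype V] [DecidableEq V] {R : Type*} [CommRing R]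

theorem matrix_tree (r : V) (A : V → V → R) (hA : ∀ v, A v v = 0) :
    (lap r A).det = ∑ f : ({v : V // v ≠ r} → V),
      if CycleFree r f then ∏ i : {v : V // v ≠ r}, A i.1 (f i) else 0 := by
  rw [← Matrix.det_transpose, Matrix.det_apply']
  have trans : ∀ (σ : Perm {v : V // v ≠ r}),
      ∏ i : {v : V // v ≠ r}, (lap r A).transpose (σ i) i
      = ∑ f : ({v : V // v ≠ r} → V), ∏ i : {v : V // v ≠ r}, c r A σ i (f i) := by
    intro σ
    have e1 : ∀ i : {v : V // v ≠ r}, (lap r A).transpose (σ i) i = ∑ u, c r A σ i u := by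
      intro i
      rw [Matrix.transpose_apply]
      exact lap_eq_sum_c r A σ i
    rw [Finset.prod_congr rfl (fun i _ => e1 i),
      Finset.prod_univ_sum (fun _ => (univ : Finset V)) (fun i u => c r A σ i u)]
    rw [Fintype.piFinset_univ]
  rw [Finset.sum_congr rfl (fun σ _ => by rw [trans σ, Finset.mul_sum])]
  rw [Finset.sum_comm]
  refine Finset.sum_congr rfl fun f _ => ?_
  by_cases hfix : ∃ i : {v : V // v ≠ r}, f i = ↑i
  · obtain ⟨i, hi⟩ := hfix
    have hz : ∀ σ : Perm {v : V // v ≠ r},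
        ((Perm.sign σ : ℤ) : R) * ∏ j : {v : V // v ≠ r}, c r A σ j (f j) = 0 := by
      intro σ
      have : ∏ j : {v : V // v ≠ r}, c r A σ j (f j) = 0 := by
        refine Finset.prod_eq_zero (mem_univ i) ?_
        by_cases h : σ i = i
        · simp [c, h, hi, hA]
        · have : ¬ (f i = ↑(σ i)) := by
            rw [hi]
            exact fun e => h (Subtype.coe_injective e).symm
          simp [c, h, this]
      rw [this, mul_zero]
    rw [Finset.sum_eq_zero fun σ _ => hz σ]
    have : ∏ j : {v : V // v ≠ r}, A j.1 (f j) = 0 := by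
      refine Finset.prod_eq_zero (mem_univ i) ?_
      rw [hi, hA]
    rw [this, ite_self]
  · push_neg at hfix
    by_cases hcf : CycleFree r f
    · rw [if_pos hcf]
      rw [Finset.sum_eq_single 1 ?h1 (fun h => absurd (mem_univ 1) h)]
      · have : ∀ j : {v : V // v ≠ r}, c r A 1 j (f j) = A j.1 (f j) := by
          intro j; simp [c]
        rw [Finset.prod_congr rfl fun j _ => this j]
        simp
      · intro σ _ hσ1
        by_cases hg : ∀ i, σ i ≠ i → f i = ↑(σ i)
        · exfalso
          have hne : σ.support.Nonempty := by
            rwa [Finset.nonempty_iff_ne_empty, ne_eq, Perm.support_eq_empty_iff]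
          obtain ⟨i, hi⟩ := hne
          have key : ∀ n, ∃ j ∈ σ.support, (ext r f)^[n] ↑i = ↑j := by
            intro n
            induction n with
            | zero => exact ⟨i, hi, rfl⟩
            | succ n ih =>
              obtain ⟨j, hj, hji⟩ := ih
              refine ⟨σ j, Perm.apply_mem_support.mpr hj, ?_⟩
              rw [Function.iterate_succ_apply', hji, ext_coe,
                hg j (Perm.mem_support.mp hj)]
          obtain ⟨n, hn⟩ := hcf ↑i
          obtain ⟨j, _, hji⟩ := key n
          rw [hn] at hji
          exact j.2 hji.symm
        · rw [prod_c_of_not_mem r A f σ hg, mul_zero]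
    · rw [if_neg hcf]
      obtain ⟨i0, d0, hd0, hper⟩ := exists_periodic hcf
      rw [← Finset.sum_filter_add_sum_filter_not univ
        (fun σ : Perm {v : V // v ≠ r} => ∀ i, σ i ≠ i → f i = ↑(σ i))]
      rw [cancel_sum hd0 hper A hfix]
      rw [Finset.sum_eq_zero, add_zero]
      intro σ hσ
      rw [prod_c_of_not_mem r A f σ (Finset.mem_filter.mp hσ).2, mul_zero]

end MT5

namespace TENS
open Finset
variable {K : Type*} [CommRing K] {k : ℕ}

/-- entrywise tensor product of 2x2 matrices -/
def tens (M : Fin k → Matrix Bool Bool K) : Matrix (Fin k → Bool) (Fin k → Bool) K :=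
  Matrix.of fun v w => ∏ i, M i (v i) (w i)

lemma tens_apply (M : Fin k → Matrix Bool Bool K) (v w : Fin k → Bool) :
    tens M v w = ∏ i, M i (v i) (w i) := rfl

lemma tens_mul (M N : Fin k → Matrix Bool Bool K) :
    tens M * tens N = tens (fun i => M i * N i) := by
  ext v w
  rw [Matrix.mul_apply, tens_apply]
  have : ∀ i : Fin k, (M i * N i) (v i) (w i) = ∑ b : Bool, M i (v i) b * N i b (w i) :=
    fun i => Matrix.mul_apply
  rw [Finset.prod_congr rfl fun i _ => this i,
    Finset.prod_univ_sum (fun _ => (univ : Finset Bool))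
      (fun i b => M i (v i) b * N i b (w i)), Fintype.piFinset_univ]
  refine Finset.sum_congr rfl fun u _ => ?_
  rw [tens_apply, tens_apply, ← Finset.prod_mul_distrib]

lemma tens_one : tens (fun _ : Fin k => (1 : Matrix Bool Bool K)) = 1 := by
  ext v w
  rw [tens_apply, Matrix.one_apply]
  by_cases h : v = w
  · subst h
    rw [if_pos rfl]
    exact Finset.prod_eq_one fun i _ => Matrix.one_apply_eq (v i)
  · rw [if_neg h]
    obtain ⟨i, hi⟩ : ∃ i, v i ≠ w i := by
      by_contra hc
      push_neg at hc
      exact h (funext hc)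
    exact Finset.prod_eq_zero (mem_univ i) (Matrix.one_apply_ne hi)

/-- the (r,r) entry of the adjugate is the det of the minor omitting row/col r. -/
lemma adjugate_diag_eq_det_minor {W : Type*} [Fintype W] [DecidableEq W]
    (B : Matrix W W K) (r : W) :
    B.adjugate r r =
      (Matrix.of fun i j : {v : W // v ≠ r} => B (i : W) (j : W)).det := by
  classical
  rw [Matrix.adjugate_apply]
  set N := B.updateRow r (Pi.single r 1) with hN
  haveI : Unique {v : W // ¬ v ≠ r} :=
    ⟨⟨⟨r, by simp⟩⟩, by rintro ⟨x, hx⟩; simp only [ne_eq, not_not] at hx; subst hx; rfl⟩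
  let e : {v : W // v ≠ r} ⊕ {v : W // ¬ v ≠ r} ≃ W := Equiv.sumCompl (fun v => v ≠ r)
  rw [← Matrix.det_submatrix_equiv_self e N]
  have hblock : N.submatrix e e =
      Matrix.fromBlocks (Matrix.of fun i j : {v : W // v ≠ r} => B (i : W) (j : W))
        (Matrix.of fun (i : {v : W // v ≠ r}) (j : {v : W // ¬ v ≠ r}) => B (i : W) (j : W))
        0 1 := by
    ext i j
    cases i with
    | inl i =>
      cases j with
      | inl j =>
        simp only [Matrix.submatrix_apply, Matrix.fromBlocks_apply₁₁]
        show N (e (Sum.inl i)) (e (Sum.inl j)) = _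
        simp only [e, Equiv.sumCompl_apply_inl]
        rw [hN, Matrix.updateRow_apply, if_neg i.2]
        rfl
      | inr j =>
        simp only [Matrix.submatrix_apply, Matrix.fromBlocks_apply₁₂]
        show N (e (Sum.inl i)) (e (Sum.inr j)) = _
        simp only [e, Equiv.sumCompl_apply_inl, Equiv.sumCompl_apply_inr]
        rw [hN, Matrix.updateRow_apply, if_neg i.2]
        rfl
    | inr i =>
      have hir : (i : W) = r := not_not.mp i.2
      cases j with
      | inl j =>
        simp only [Matrix.submatrix_apply, Matrix.fromBlocks_apply₂₁]
        show N (e (Sum.inr i)) (e (Sum.inl j)) = _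
        simp only [e, Equiv.sumCompl_apply_inr, Equiv.sumCompl_apply_inl]
        rw [hN, hir, Matrix.updateRow_self]
        rw [Pi.single_apply, if_neg (fun h => j.2 h)]
        rfl
      | inr j =>
        have hjr : (j : W) = r := not_not.mp j.2
        simp only [Matrix.submatrix_apply, Matrix.fromBlocks_apply₂₂]
        show N (e (Sum.inr i)) (e (Sum.inr j)) = _
        simp only [e, Equiv.sumCompl_apply_inr]
        rw [hN, hir, hjr, Matrix.updateRow_self, Pi.single_apply, if_pos rfl]
        have : i = j := Subsingleton.elim i j
        subst this
        rw [Matrix.one_apply_eq]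
  rw [hblock, Matrix.det_fromBlocks_zero₂₁, Matrix.det_one, mul_one]

end TENS


namespace HYP
open Finset
open scoped Classical

variable {K : Type*} [Field K] {k : ℕ}

noncomputable def Pm (y : Fin k → Bool → K) (i : Fin k) : Matrix Bool Bool K :=
  Matrix.of fun b j => if j then (if b then -(y i false) else y i true) else 1

noncomputable def Qm (y : Fin k → Bool → K) (i : Fin k) : Matrix Bool Bool K :=
  Matrix.of fun j b => (if j then (if b then (-1 : K) else 1) else y i b) / (y i false + y i true)

noncomputable def dm (y : Fin k → Bool → K) (i : Fin k) : Matrix Bool Bool K :=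
  Matrix.diagonal (fun j => if j then y i false + y i true else 0)

noncomputable def lm (y : Fin k → Bool → K) (i : Fin k) : Matrix Bool Bool K :=
  Matrix.of fun b b' => if b = b' then y i (!b) else -(y i b')

variable (y : Fin k → Bool → K)

lemma QP (hs : ∀ i, y i false + y i true ≠ 0) (i : Fin k) : Qm y i * Pm y i = 1 := by
  have h := hs i
  ext j b
  cases j <;> cases b <;>
    simp [Matrix.mul_apply, Fintype.sum_bool, Qm, Pm, Matrix.one_apply] <;>
    field_simp <;> ring

lemma PQ (hs : ∀ i, y i false + y i true ≠ 0) (i : Fin k) : Pm y i * Qm y i = 1 :=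
  mul_eq_one_comm.mp (QP y hs i)

lemma PdQ (hs : ∀ i, y i false + y i true ≠ 0) (i : Fin k) :
    Pm y i * dm y i * Qm y i = lm y i := by
  have h := hs i
  ext b b'
  cases b <;> cases b' <;>
    simp [Matrix.mul_apply, Fintype.sum_bool, Qm, Pm, dm, lm, Matrix.diagonal] <;>
    field_simp <;> ring

end HYP

namespace HYP2
open Finset HYP TENS
open scoped Classical

variable {K : Type*} [Field K] {k : ℕ}

def wtK (y : Fin k → Bool → K) (v w : Fin k → Bool) : K :=
  ∏ i ∈ univ.filter (fun i => v i ≠ w i), y i (w i)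

def AK (y : Fin k → Bool → K) (v w : Fin k → Bool) : K :=
  if (univ.filter (fun i => v i ≠ w i)).card = 1 then wtK y v w else 0

noncomputable def Lg (y : Fin k → Bool → K) : Matrix (Fin k → Bool) (Fin k → Bool) K :=
  Matrix.of fun v w => if v = w then ∑ u, AK y v u else - AK y v w

variable (y : Fin k → Bool → K)

lemma filter_diff_update (v : Fin k → Bool) (i : Fin k) :
    univ.filter (fun j => v j ≠ Function.update v i (!(v i)) j) = {i} := by
  ext j
  simp only [mem_filter, mem_univ, true_and, mem_singleton]
  by_cases h : j = i
  · subst h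
    simp [Function.update_self]
  · simp [Function.update_of_ne h, h]

lemma wtK_update (v : Fin k → Bool) (i : Fin k) :
    wtK y v (Function.update v i (!(v i))) = y i (!(v i)) := by
  rw [wtK, filter_diff_update, Finset.prod_singleton, Function.update_self]

lemma wtK_single {v w : Fin k → Bool} {i : Fin k}
    (h : univ.filter (fun j => v j ≠ w j) = {i}) : wtK y v w = y i (w i) := by
  rw [wtK, h, Finset.prod_singleton]

lemma eq_update_of_single {v w : Fin k → Bool} {i : Fin k}
    (h : univ.filter (fun j => v j ≠ w j) = {i}) :
    w = Function.update v i (!(v i)) := by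
  funext j
  by_cases hj : j = i
  · subst hj
    have : v j ≠ w j := by
      have := h ▸ (mem_singleton_self j)
      exact (mem_filter.mp this).2
    rw [Function.update_self]
    cases hv : v j <;> cases hw : w j <;> simp_all
  · have : ¬ (v j ≠ w j) := by
      intro hne
      have : j ∈ ({i} : Finset (Fin k)) := h ▸ (mem_filter.mpr ⟨mem_univ j, hne⟩)
      exact hj (mem_singleton.mp this)
    rw [Function.update_of_ne hj]
    exact not_not.mp (fun hne => this (Ne.symm hne))

lemma update_inj (v : Fin k → Bool) :
    Function.Injective (fun i => Function.update v i (!(v i))) := by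
  intro i i' h
  by_contra hne
  have h1 : Function.update v i (!(v i)) i = Function.update v i' (!(v i')) i := congrFun h i
  rw [Function.update_self, Function.update_of_ne hne] at h1
  cases hvi : v i <;> rw [hvi] at h1 <;> simp at h1

lemma sum_AK (v : Fin k → Bool) : ∑ u, AK y v u = ∑ i, y i (!(v i)) := by
  have himg : univ.filter (fun u => (univ.filter fun j => v j ≠ u j).card = 1)
      = Finset.image (fun i => Function.update v i (!(v i))) univ := by
    ext u
    simp only [mem_filter, mem_univ, true_and, Finset.mem_image]
    constructor
    · intro hc
      obtain ⟨i, hi⟩ := Finset.card_eq_one.mp hc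
      exact ⟨i, (eq_update_of_single hi).symm⟩
    · rintro ⟨i, _, rfl⟩
      rw [filter_diff_update]
      simp
  rw [show (∑ u, AK y v u) = ∑ u ∈ univ.filter
      (fun u => (univ.filter fun j => v j ≠ u j).card = 1), wtK y v u by
    rw [Finset.sum_filter]
    exact Finset.sum_congr rfl fun u _ => rfl]
  rw [himg, Finset.sum_image (fun i _ i' _ h => update_inj v h)]
  exact Finset.sum_congr rfl fun i _ => wtK_update y v i

lemma Lg_eq_sum : Lg y = ∑ i, tens (fun j => if j = i then lm y i else 1) := by
  ext v w
  have hsum : (∑ i, tens (fun j => if j = i then lm y i else 1)) v w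
      = ∑ i, ∏ j, (if j = i then lm y i else 1) (v j) (w j) := by
    rw [Matrix.sum_apply]
    exact Finset.sum_congr rfl fun i _ => rfl
  rw [hsum]
  by_cases hvw : v = w
  · subst hvw
    have : ∀ i : Fin k, ∏ j, (if j = i then lm y i else 1) (v j) (v j) = y i (!(v i)) := by
      intro i
      rw [Finset.prod_eq_single i
        (fun j _ hj => by rw [if_neg hj]; exact Matrix.one_apply_eq (v j))
        (fun h => absurd (mem_univ i) h)]
      rw [if_pos rfl, lm]
      simp
    rw [Finset.sum_congr rfl fun i _ => this i]
    have hAK := sum_AK y v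
    simp [Lg, hAK]
  · simp only [Lg, Matrix.of_apply, if_neg hvw]
    set D := univ.filter (fun j => v j ≠ w j) with hD
    have hDne : D.Nonempty := by
      by_contra hc
      rw [Finset.not_nonempty_iff_eq_empty] at hc
      refine hvw (funext fun j => ?_)
      by_contra hne
      have : j ∈ D := mem_filter.mpr ⟨mem_univ j, hne⟩
      simp [hc] at this
    by_cases hcard : D.card = 1
    · obtain ⟨i0, hi0⟩ := Finset.card_eq_one.mp hcard
      have hi0mem : i0 ∈ D := by rw [hi0]; exact mem_singleton_self i0
      have hvi0 : v i0 ≠ w i0 := (mem_filter.mp hi0mem).2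
      have hterm : ∀ i : Fin k, (∏ j, (if j = i then lm y i else 1) (v j) (w j))
          = if i = i0 then -(y i0 (w i0)) else 0 := by
        intro i
        by_cases hii : i = i0
        · subst hii
          rw [if_pos rfl]
          have hother : ∀ j ∈ univ, j ≠ i → (if j = i then lm y i else 1) (v j) (w j) = 1 := by
            intro j _ hj
            rw [if_neg hj]
            have hvj : v j = w j := by
              by_contra hne
              exact hj (mem_singleton.mp (by rw [← hi0]; exact mem_filter.mpr ⟨mem_univ j, hne⟩))
            rw [← hvj]
            exact Matrix.one_apply_eq (v j)
          rw [Finset.prod_eq_single i hother (fun h => absurd (mem_univ i) h)]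
          rw [if_pos rfl, lm]
          simp [hvi0]
        · rw [if_neg hii]
          refine Finset.prod_eq_zero (mem_univ i0) ?_
          rw [if_neg (show ¬ i0 = i from fun e => hii e.symm)]
          exact Matrix.one_apply_ne hvi0
      rw [Finset.sum_congr rfl fun i _ => hterm i, Finset.sum_ite_eq' univ i0
        (fun _ => -(y i0 (w i0)))]
      rw [if_pos (mem_univ i0), AK, ← hD, if_pos hcard, wtK_single y hi0]
    · have hA : AK y v w = 0 := by rw [AK, ← hD, if_neg hcard]
      rw [hA, neg_zero]
      refine (Finset.sum_eq_zero fun i _ => ?_).symm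
      have h2 : 2 ≤ D.card := by
        rcases Nat.lt_or_ge D.card 2 with h | h
        · exfalso
          have h1 : D.card = 0 ∨ D.card = 1 := by omega
          rcases h1 with h1 | h1
          · obtain ⟨j, hj⟩ := hDne
            rw [Finset.card_eq_zero] at h1
            simp [h1] at hj
          · exact hcard h1
        · exact h
      obtain ⟨j, hjD, hjne⟩ : ∃ j ∈ D, j ≠ i := by
        obtain ⟨a, ha, b, hb, hab⟩ := Finset.one_lt_card.mp h2
        by_cases hai : a = i
        · exact ⟨b, hb, fun e => hab (by rw [hai, e])⟩
        · exact ⟨a, ha, hai⟩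
      refine Finset.prod_eq_zero (mem_univ j) ?_
      rw [if_neg hjne]
      exact Matrix.one_apply_ne (mem_filter.mp hjD).2

end HYP2

namespace HYP3
open Finset HYP HYP2 TENS
open scoped Classical

variable {K : Type*} [Field K] {k : ℕ} (y : Fin k → Bool → K)

noncomputable def lamJ (J : Fin k → Bool) : K := ∑ i, if J i then y i false + y i true else 0

noncomputable def Dg : Matrix (Fin k → Bool) (Fin k → Bool) K := Matrix.diagonal (lamJ y)

lemma Dg_eq_sum : Dg y = ∑ i, tens (fun j => if j = i then dm y i else 1) := by
  ext J J'
  have hsum : (∑ i, tens fun j => if j = i then dm y i else 1) J J'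
      = ∑ i, ∏ j, (if j = i then dm y i else 1) (J j) (J' j) := by
    rw [Matrix.sum_apply]
    exact Finset.sum_congr rfl fun i _ => rfl
  rw [hsum]
  by_cases h : J = J'
  · subst h
    have : ∀ i : Fin k, (∏ j, (if j = i then dm y i else 1) (J j) (J j))
        = if J i then y i false + y i true else 0 := by
      intro i
      rw [Finset.prod_eq_single i
        (fun j _ hj => by rw [if_neg hj]; exact Matrix.one_apply_eq (J j))
        (fun h => absurd (mem_univ i) h), if_pos rfl, dm, Matrix.diagonal_apply_eq]
    rw [Finset.sum_congr rfl fun i _ => this i]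
    rw [Dg, Matrix.diagonal_apply_eq, lamJ]
  · rw [Dg, Matrix.diagonal_apply_ne _ h]
    obtain ⟨j0, hj0⟩ : ∃ j0, J j0 ≠ J' j0 := by
      by_contra hc
      push_neg at hc
      exact h (funext hc)
    refine (Finset.sum_eq_zero fun i _ => ?_).symm
    refine Finset.prod_eq_zero (mem_univ j0) ?_
    by_cases hji : j0 = i
    · subst hji
      rw [if_pos rfl, dm, Matrix.diagonal_apply_ne _ hj0]
    · rw [if_neg hji]
      exact Matrix.one_apply_ne hj0

variable (hs : ∀ i, y i false + y i true ≠ 0)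
include hs

lemma tensQP : tens (Qm y) * tens (Pm y) = 1 := by
  rw [tens_mul, show (fun i => Qm y i * Pm y i) = fun _ => (1 : Matrix Bool Bool K) from
    funext fun i => QP y hs i, tens_one]

lemma tensPQ : tens (Pm y) * tens (Qm y) = 1 := mul_eq_one_comm.mp (tensQP y hs)

lemma LPDQ : Lg y = tens (Pm y) * Dg y * tens (Qm y) := by
  rw [Lg_eq_sum, Dg_eq_sum, Matrix.mul_sum, Matrix.sum_mul]
  refine Finset.sum_congr rfl fun i _ => ?_
  rw [tens_mul, tens_mul]
  have hfn : (fun j => Pm y j * (if j = i then dm y i else 1) * Qm y j)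
      = (fun j => if j = i then lm y i else 1) := by
    funext j
    by_cases hj : j = i
    · subst hj
      rw [if_pos rfl, if_pos rfl, PdQ y hs]
    · rw [if_neg hj, if_neg hj, mul_one, PQ y hs]
  rw [hfn]

lemma adjL : (Lg y).adjugate = tens (Pm y) * (Dg y).adjugate * tens (Qm y) := by
  set P := tens (Pm y) with hP
  set Q := tens (Qm y) with hQ
  have hQP : Q * P = 1 := tensQP y hs
  have hPQ : P * Q = 1 := tensPQ y hs
  have hdet : Q.det * P.det = 1 := by rw [← Matrix.det_mul, hQP, Matrix.det_one]
  have adjP : P.adjugate = P.det • Q := by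
    calc P.adjugate = P.adjugate * (P * Q) := by rw [hPQ, mul_one]
    _ = (P.adjugate * P) * Q := by rw [mul_assoc]
    _ = (P.det • (1 : Matrix _ _ K)) * Q := by rw [Matrix.adjugate_mul]
    _ = P.det • Q := by rw [Matrix.smul_mul, one_mul]
  have adjQ : Q.adjugate = Q.det • P := by
    calc Q.adjugate = Q.adjugate * (Q * P) := by rw [hQP, mul_one]
    _ = (Q.adjugate * Q) * P := by rw [mul_assoc]
    _ = (Q.det • (1 : Matrix _ _ K)) * P := by rw [Matrix.adjugate_mul]
    _ = Q.det • P := by rw [Matrix.smul_mul, one_mul]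
  rw [LPDQ y hs, Matrix.adjugate_mul_distrib, Matrix.adjugate_mul_distrib, adjP, adjQ]
  have hdet' : P.det * Q.det = 1 := by rw [← Matrix.det_mul, hPQ, Matrix.det_one]
  simp only [Matrix.mul_smul, Matrix.smul_mul, smul_smul]
  rw [hdet', one_smul]
  exact (mul_assoc _ _ _).symm

def botJ (k : ℕ) : Fin k → Bool := fun _ => false

omit hs in
lemma lam_bot : lamJ y (botJ k) = 0 := by
  rw [lamJ]
  refine Finset.sum_eq_zero fun i _ => ?_
  rw [botJ, if_neg (by simp)]

lemma adjL_entry (m : Fin k → Bool) :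
    (Lg y).adjugate m m =
      (∏ J' ∈ univ.erase (botJ k), lamJ y J') * ((∏ i, y i (m i)) / ∏ i, (y i false + y i true)) := by
  rw [adjL y hs, Dg, Matrix.adjugate_diagonal]
  have h1 : (tens (Pm y) * Matrix.diagonal (fun i => ∏ j ∈ univ.erase i, lamJ y j)
      * tens (Qm y)) m m
      = ∑ J, tens (Pm y) m J * (∏ j ∈ univ.erase J, lamJ y j) * tens (Qm y) J m := by
    rw [Matrix.mul_apply]
    refine Finset.sum_congr rfl fun J _ => ?_
    rw [Matrix.mul_diagonal]
  rw [h1, Finset.sum_eq_single (botJ k) ?hz ?hnm]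
  · have hPb : tens (Pm y) m (botJ k) = 1 := by
      rw [tens_apply]
      refine Finset.prod_eq_one fun i _ => ?_
      rw [Pm, botJ]
      simp
    have hQb : tens (Qm y) (botJ k) m = (∏ i, y i (m i)) / ∏ i, (y i false + y i true) := by
      rw [tens_apply, ← Finset.prod_div_distrib]
      refine Finset.prod_congr rfl fun i _ => ?_
      rw [Qm, botJ]
      simp
    rw [hPb, hQb, one_mul]
  · intro J _ hJ
    have : (∏ j ∈ univ.erase J, lamJ y j) = 0 := by
      refine Finset.prod_eq_zero (Finset.mem_erase.mpr ⟨fun e => hJ e.symm, mem_univ _⟩) ?_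
      exact lam_bot y
    rw [this, mul_zero, zero_mul]
  · intro h
    exact absurd (mem_univ _) h

end HYP3

namespace HYP4
open Finset HYP HYP2 HYP3 TENS
open scoped Classical

variable {K : Type*} [Field K] {k : ℕ} (y : Fin k → Bool → K)

lemma prod_reindex :
    ∏ J' ∈ (univ : Finset (Fin k → Bool)).erase (botJ k), lamJ y J'
      = ∏ S ∈ (univ : Finset (Finset (Fin k))).erase ∅,
          (∑ i ∈ S, (y i false + y i true)) := by
  refine Finset.prod_nbij' (fun J => univ.filter (fun i => J i = true))
    (fun S => fun i => decide (i ∈ S)) ?hi ?hj ?left ?right ?h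
  · intro J hJ
    rw [Finset.mem_erase] at hJ ⊢
    refine ⟨?_, mem_univ _⟩
    intro he
    refine hJ.1 (funext fun i => ?_)
    have he2 : univ.filter (fun i => J i = true) = ∅ := he
    have : i ∉ univ.filter (fun i => J i = true) := by rw [he2]; exact notMem_empty i
    simp only [mem_filter, mem_univ, true_and] at this
    simp [botJ, this]
  · intro S hS
    rw [Finset.mem_erase] at hS ⊢
    refine ⟨?_, mem_univ _⟩
    intro he
    obtain ⟨i, hi⟩ := Finset.nonempty_iff_ne_empty.mpr hS.1
    have := congrFun he i
    simp [botJ, hi] at this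
  · intro J _
    funext i
    simp
  · intro S _
    ext i
    simp
  · intro J _
    rw [lamJ, Finset.sum_filter]

lemma prod_singletons :
    ∏ S ∈ (univ : Finset (Finset (Fin k))).filter (fun S => S.card = 1),
        (∑ i ∈ S, (y i false + y i true)) = ∏ i, (y i false + y i true) := by
  refine (Finset.prod_bij (fun (i : Fin k) _ => ({i} : Finset (Fin k))) ?hi ?inj ?surj ?h).symm
  · intro i _
    simp
  · intro a _ b _ h
    exact Finset.singleton_injective h
  · intro S hS
    simp only [mem_filter, mem_univ, true_and] at hS
    obtain ⟨a, rfl⟩ := Finset.card_eq_one.mp hS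
    exact ⟨a, mem_univ a, rfl⟩
  · intro i _
    exact (Finset.sum_singleton _ _).symm

lemma erase_empty_split :
    (univ : Finset (Finset (Fin k))).erase ∅ =
      (univ.filter (fun S => S.card = 1)) ∪ (univ.filter (fun S => 2 ≤ S.card)) := by
  ext S
  simp only [Finset.mem_erase, mem_univ, and_true, Finset.mem_union, mem_filter, true_and]
  constructor
  · intro h
    have h0 : S.card ≠ 0 := fun e => h (Finset.card_eq_zero.mp e)
    omega
  · intro h e
    subst e
    simp at h

variable (hs : ∀ i, y i false + y i true ≠ 0)
include hs

lemma adj_entry_final (m : Fin k → Bool) :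
    (Lg y).adjugate m m = (∏ i, y i (m i)) *
      ∏ S ∈ univ.filter (fun S : Finset (Fin k) => 2 ≤ S.card),
        (∑ i ∈ S, (y i false + y i true)) := by
  rw [adjL_entry y hs m, prod_reindex, erase_empty_split, Finset.prod_union ?disj,
    prod_singletons]
  case disj =>
    rw [Finset.disjoint_left]
    intro S h1 h2
    simp only [mem_filter, mem_univ, true_and] at h1 h2
    omega
  have hne : (∏ i, (y i false + y i true)) ≠ 0 := Finset.prod_ne_zero_iff.mpr fun i _ => hs i
  field_simp

omit hs in
lemma AK_self (v : Fin k → Bool) : AK y v v = 0 := by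
  rw [AK, if_neg]
  simp

/-- the main generic identity -/
theorem generic_main (m : Fin k → Bool) :
    ∑ f : ({v : Fin k → Bool // v ≠ m} → (Fin k → Bool)),
      (if MT.CycleFree m f then ∏ i : {v : Fin k → Bool // v ≠ m}, AK y i.1 (f i) else 0)
    = (∏ i, y i (m i)) *
      ∏ S ∈ univ.filter (fun S : Finset (Fin k) => 2 ≤ S.card),
        (∑ i ∈ S, (y i false + y i true)) := by
  rw [← MT5.matrix_tree m (AK y) (AK_self y), ← adj_entry_final y hs m,
    adjugate_diag_eq_det_minor (Lg y) m]
  congr 1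
  ext i j
  by_cases h : i = j
  · subst h
    simp only [MT.lap, Matrix.of_apply, if_pos rfl, Lg]
  · have hc : (i : Fin k → Bool) ≠ (j : Fin k → Bool) := fun e => h (Subtype.coe_injective e)
    simp only [MT.lap, Matrix.of_apply, if_neg h, Lg, if_neg hc]

end HYP4

namespace GLUE
open Finset
open scoped Classical

variable {V : Type*} {R : Type*} [CommRing R]

variable [Fintype V] [DecidableEq V]

noncomputable def funTree (E : V → V → Prop) (m : V) (f : {v : V // v ≠ m} → V)
    (hcf : MT.CycleFree m f) (hf : ∀ i : {v : V // v ≠ m}, E i.1 (f i)) : SpTree E where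
  root := m
  out := MT.ext m f
  out_root := MT.ext_r m f
  edge_mem := fun v hv => by
    rw [show MT.ext m f v = f ⟨v, hv⟩ from dif_neg hv]
    exact hf ⟨v, hv⟩
  reach := hcf

lemma treeExt (m : V) (a : SpTree (E := E)) (ha : a.root = m) :
    MT.ext m (fun i : {v : V // v ≠ m} => a.out i.1) = a.out := by
  funext v
  by_cases hv : v = m
  · subst hv
    rw [MT.ext_r]
    rw [← ha, a.out_root]
  · exact dif_neg hv

theorem tree_sum_eq (E : V → V → Prop) (x : V × V → R) (m : V)
    (A : V → V → R) (hA : ∀ v w, A v w = if E v w then x (v, w) else 0) :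
    ∑ a ∈ univ.filter (fun a : SpTree E => a.root = m), treeWt x a
      = ∑ f : ({v : V // v ≠ m} → V),
          (if MT.CycleFree m f then ∏ i : {v : V // v ≠ m}, A i.1 (f i) else 0) := by
  rw [show (∑ f : ({v : V // v ≠ m} → V),
        (if MT.CycleFree m f then ∏ i : {v : V // v ≠ m}, A i.1 (f i) else 0))
      = ∑ f ∈ univ.filter (fun f : ({v : V // v ≠ m} → V) => MT.CycleFree m f),
          ∏ i : {v : V // v ≠ m}, A i.1 (f i) from (Finset.sum_filter _ _).symm]
  have hsplit : ∀ f : ({v : V // v ≠ m} → V),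
      (∏ i : {v : V // v ≠ m}, A i.1 (f i))
      = if (∀ i : {v : V // v ≠ m}, E i.1 (f i)) then
          ∏ i : {v : V // v ≠ m}, x (i.1, f i) else 0 := by
    intro f
    by_cases hf : ∀ i : {v : V // v ≠ m}, E i.1 (f i)
    · rw [if_pos hf]
      exact Finset.prod_congr rfl fun i _ => by rw [hA, if_pos (hf i)]
    · rw [if_neg hf]
      push_neg at hf
      obtain ⟨i, hi⟩ := hf
      refine Finset.prod_eq_zero (mem_univ i) ?_
      rw [hA, if_neg hi]
  rw [Finset.sum_congr rfl fun f _ => hsplit f, ← Finset.sum_filter, Finset.filter_filter]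
  refine Finset.sum_bij' (fun a _ => fun i : {v : V // v ≠ m} => a.out i.1)
    (fun f hf => funTree E m f ((Finset.mem_filter.mp hf).2.1)
      (fun i => (Finset.mem_filter.mp hf).2.2 i)) ?hi ?hj ?left ?right ?val
  case hi =>
    intro a ha
    have ham : a.root = m := (Finset.mem_filter.mp ha).2
    refine Finset.mem_filter.mpr ⟨mem_univ _, ?_, ?_⟩
    · intro v
      obtain ⟨n, hn⟩ := a.reach v
      exact ⟨n, by rw [treeExt m a ham, hn, ham]⟩
    · intro i
      exact a.edge_mem i.1 (fun e => i.2 (e.trans ham))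
  case hj =>
    intro f hf
    exact Finset.mem_filter.mpr ⟨mem_univ _, rfl⟩
  case left =>
    intro a ha
    have ham : a.root = m := (Finset.mem_filter.mp ha).2
    exact SpTree.ext' ham.symm (treeExt m a ham)
  case right =>
    intro f hf
    funext i
    show MT.ext m f i.1 = f i
    exact dif_neg i.2
  case val =>
    intro a ha
    have ham : a.root = m := (Finset.mem_filter.mp ha).2
    rw [treeWt]
    refine (Finset.prod_congr
      (show _ = univ.filter (fun v : V => v ≠ m) by ext v; simp [ham])
      (fun v _ => rfl)).trans ?_
    exact Finset.prod_subtype (univ.filter (fun v : V => v ≠ m))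
      (fun v => by simp) (fun v => x (v, a.out v))

end GLUE

set_option synthInstance.maxHeartbeats 1000000 in
set_option maxHeartbeats 1000000 in
/-- The generating polynomial of oriented spanning trees of the
hypercube `{0,1}^k` rooted at the vertex `m` equals
`(∏_i y_i^{m_i}) · ∏_{J ⊆ {1,…,k}, |J| ≥ 2} (Σ_{i ∈ J} (y_i^0 + y_i^1))`. -/
theorem statement18 (k : ℕ) (hk : 1 ≤ k) (m : HV k) :
    ∑ a ∈ univ.filter (fun a : SpTree (HE k) => a.root = m), treeWt (hwt k) a =
      (∏ i : Fin k, hy k i (m i)) *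
        ∏ J ∈ univ.filter (fun J : Finset (Fin k) => 2 ≤ J.card),
          (∑ i ∈ J, (hy k i false + hy k i true)) := by
  set K := FractionRing (HR k) with hK
  set φ := algebraMap (HR k) K with hφ
  set y : Fin k → Bool → K := fun i b => φ (hy k i b) with hy_def
  have hs : ∀ i, y i false + y i true ≠ 0 := by
    intro i h
    rw [hy_def] at h
    simp only [← map_add] at h
    have h0 : hy k i false + hy k i true = 0 :=
      IsFractionRing.injective (HR k) K (by rw [h, map_zero])
    have h1 := congrArg (MvPolynomial.eval (fun _ => (1 : ℂ))) h0
    simp [hy] at h1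
  refine IsFractionRing.injective (HR k) K ?_
  rw [map_sum]
  have hL : ∀ a ∈ univ.filter (fun a : SpTree (HE k) => a.root = m),
      φ (treeWt (hwt k) a) = treeWt (fun e => φ (hwt k e)) a := by
    intro a _
    rw [treeWt, treeWt, map_prod]
  rw [Finset.sum_congr rfl hL]
  have hA : ∀ v w : HV k, HYP2.AK y v w = if HE k v w then φ (hwt k (v, w)) else 0 := by
    intro v w
    by_cases h : HE k v w
    · rw [HYP2.AK, if_pos (show (univ.filter (fun i => v i ≠ w i)).card = 1 from h),
        if_pos h, HYP2.wtK]
      rw [show hwt k (v, w) = ∏ i ∈ univ.filter (fun i => v i ≠ w i), hy k i (w i) from rfl,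
        map_prod]
    · rw [HYP2.AK, if_neg (show ¬ (univ.filter (fun i => v i ≠ w i)).card = 1 from h),
        if_neg h]
  rw [GLUE.tree_sum_eq (HE k) (fun e => φ (hwt k e)) m (HYP2.AK y) (fun v w => hA v w)]
  rw [HYP4.generic_main y hs m]
  rw [map_mul, map_prod]
  congr 1
  rw [map_prod]
  refine Finset.prod_congr rfl fun S _ => ?_
  rw [map_sum]
  refine Finset.sum_congr rfl fun i _ => ?_
  rw [map_add]
end

section
/- Let k ≥ 1 and n_1,…,n_k ≥ 1, and let B be the bouquet graph with vertex set {0,1,…,k} ⊎ {v_i^j : 1 ≤ i ≤ k, 1 ≤ j ≤ n_i} and directed edges from each v_i^j to 0, from each i ∈ {1,…,k} to each v_i^j (1 ≤ j ≤ n_i), and from 0 to each i ∈ {1,…,k}; fix any total ordering of the vertices. For I ⊆ {1,…,k} let W_I = {0} ∪ {i : i ∈ I} ∪ {v_i^j : i ∈ I, 1 ≤ j ≤ n_i}. Then m(W_I) = ∏_{i ∉ I} (n_i − 1) for every I ⊆ {1,…,k}, and m(W) = 0 for every strongly connected subset W of the vertices of B that is not of the form W_I. -/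
open Classical Finset

/-- Vertices of the bouquet graph: `Sum.inl none` is the central vertex `0`,
`Sum.inl (some i)` is the petal vertex `i ∈ {1,…,k}`, and `Sum.inr ⟨i, j⟩` is the
vertex `v_i^j` (`1 ≤ j ≤ n_i`). -/
abbrev BV (k : ℕ) (n : Fin k → ℕ) := (Option (Fin k)) ⊕ (Σ i : Fin k, Fin (n i))

/-- Edges of the bouquet graph: from each `v_i^j` to `0`, from each petal vertex `i`
to each `v_i^j`, and from `0` to each petal vertex `i`. -/
def BE (k : ℕ) (n : Fin k → ℕ) : BV k n → BV k n → Prop := fun a b =>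
  match a, b with
  | Sum.inr _, Sum.inl none => True
  | Sum.inl (some i), Sum.inr ⟨i', _⟩ => i = i'
  | Sum.inl none, Sum.inl (some _) => True
  | _, _ => False

/-- The strongly connected subset `W_I` consisting of `0` together with all the
vertices of the `i`-th petal for `i ∈ I`. -/
noncomputable def WI (k : ℕ) (n : Fin k → ℕ) (I : Finset (Fin k)) : Finset (BV k n) :=
  univ.filter fun v =>
    match v with
    | Sum.inl none => True
    | Sum.inl (some i) => i ∈ I
    | Sum.inr ⟨i, _⟩ => i ∈ I


noncomputable section BouquetProof
open Classical Finset

variable {k : ℕ} {n : Fin k → ℕ}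

/-- central vertex -/
abbrev bv0 : BV k n := Sum.inl none
/-- petal vertex -/
abbrev bpv (i : Fin k) : BV k n := Sum.inl (some i)
/-- leaf vertex -/
abbrev blv (i : Fin k) (j : Fin (n i)) : BV k n := Sum.inr ⟨i, j⟩

lemma blv_inj {i : Fin k} {j j' : Fin (n i)} (h : (blv i j : BV k n) = blv i j') : j = j' := by
  simpa using h

lemma BE_lv0 (i : Fin k) (j : Fin (n i)) : BE k n (blv i j) bv0 := trivial
lemma BE_pl (i : Fin k) (j : Fin (n i)) : BE k n (bpv i) (blv i j) := rfl
lemma BE_0p (i : Fin k) : BE k n bv0 (bpv i) := trivial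

lemma BE_leaf_elim {i : Fin k} {j : Fin (n i)} {y : BV k n} (h : BE k n (blv i j) y) :
    y = bv0 := by
  rcases y with (_|_) | ⟨i', j'⟩ <;> first | rfl | exact absurd h (by intro h; exact h)

lemma BE_pv_elim {i : Fin k} {y : BV k n} (h : BE k n (bpv i) y) :
    ∃ j : Fin (n i), y = blv i j := by
  rcases y with (_|i') | ⟨i', j'⟩
  · exact absurd h (by intro h; exact h)
  · exact absurd h (by intro h; exact h)
  · cases (show i = i' from h); exact ⟨j', rfl⟩

lemma BE_v0_elim {y : BV k n} (h : BE k n bv0 y) : ∃ i, y = bpv i := by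
  rcases y with (_|i') | ⟨i', j'⟩
  · exact absurd h (by intro h; exact h)
  · exact ⟨i', rfl⟩
  · exact absurd h (by intro h; exact h)

lemma BE_into_v0 {x : BV k n} : BE k n x bv0 ↔ ∃ i j, x = blv i j := by
  constructor
  · intro h
    rcases x with (_|i) | ⟨i, j⟩
    · exact absurd h (by intro h; exact h)
    · exact absurd h (by intro h; exact h)
    · exact ⟨i, j, rfl⟩
  · rintro ⟨i, j, rfl⟩; exact BE_lv0 i j

lemma BE_into_pv {x : BV k n} {i : Fin k} : BE k n x (bpv i) ↔ x = bv0 := by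
  constructor
  · intro h
    rcases x with (_|i') | ⟨i', j'⟩
    · rfl
    · exact absurd h (by intro h; exact h)
    · exact absurd h (by intro h; exact h)
  · rintro rfl; exact BE_0p i

lemma BE_into_lv {x : BV k n} {i : Fin k} {j : Fin (n i)} :
    BE k n x (blv i j) ↔ x = bpv i := by
  constructor
  · intro h
    rcases x with (_|i') | ⟨i', j'⟩
    · exact absurd h (by intro h; exact h)
    · cases (show i' = i from h); rfl
    · exact absurd h (by intro h; exact h)
  · rintro rfl; exact BE_pl i j

section TreeLemmas
variable [Fintype (BV k n)]

/-- no set avoiding the root and closed under `out` contains anything -/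
lemma SpTree.no_closed {E : BV k n → BV k n → Prop} (a : SpTree E) {C : Set (BV k n)}
    {x : BV k n} (hx : x ∈ C) (hcl : ∀ y ∈ C, a.out y ∈ C) (hr : a.root ∉ C) : False := by
  obtain ⟨m, hm⟩ := a.reach x
  have : ∀ p, a.out^[p] x ∈ C := by
    intro p
    induction p with
    | zero => simpa using hx
    | succ p ih => rw [Function.iterate_succ_apply']; exact hcl _ ih
  exact hr (hm ▸ this m)

variable (a : SpTree (BE k n))

lemma out_leaf {i : Fin k} {j : Fin (n i)} (h : (blv i j : BV k n) ≠ a.root) :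
    a.out (blv i j) = bv0 :=
  BE_leaf_elim (a.edge_mem _ h)

lemma out_pv {i : Fin k} (h : (bpv i : BV k n) ≠ a.root) :
    ∃ j, a.out (bpv i) = blv i j :=
  BE_pv_elim (a.edge_mem _ h)

lemma out_v0 (h : (bv0 : BV k n) ≠ a.root) : ∃ i, a.out bv0 = bpv i :=
  BE_v0_elim (a.edge_mem _ h)

lemma out_v0_root_pv {i0 : Fin k} (h : a.root = bpv i0) : a.out bv0 = bpv i0 := by
  have hne : (bv0 : BV k n) ≠ a.root := by rw [h]; simp [bv0, bpv]
  obtain ⟨i, hi⟩ := out_v0 a hne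
  rcases eq_or_ne i i0 with rfl | hii
  · exact hi
  · exfalso
    have hpne : (bpv i : BV k n) ≠ a.root := by rw [h]; simp [bpv, hii]
    refine a.no_closed (C := {bv0} ∪ {bpv i} ∪ {u | ∃ j, u = blv i j})
      (x := bv0) (by simp) ?_ ?_
    · rintro y (⟨rfl | rfl⟩ | ⟨j, rfl⟩)
      · rw [hi]; simp
      · obtain ⟨j, hj⟩ := out_pv a hpne
        rw [hj]; exact Or.inr ⟨j, rfl⟩
      · have : (blv i j : BV k n) ≠ a.root := by rw [h]; simp [bpv, blv]
        rw [out_leaf a this]; simp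
    · rw [h]; rintro (⟨h1 | h1⟩ | ⟨j, h1⟩) <;> simp_all [bv0, bpv, blv, hii]

lemma out_v0_root_lv {i0 : Fin k} {j0 : Fin (n i0)} (h : a.root = blv i0 j0) :
    a.out bv0 = bpv i0 := by
  have hne : (bv0 : BV k n) ≠ a.root := by rw [h]; simp [bv0, blv]
  obtain ⟨i, hi⟩ := out_v0 a hne
  rcases eq_or_ne i i0 with rfl | hii
  · exact hi
  · exfalso
    have hpne : (bpv i : BV k n) ≠ a.root := by rw [h]; simp [bpv, blv]
    refine a.no_closed (C := {bv0} ∪ {bpv i} ∪ {u | ∃ j, u = blv i j})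
      (x := bv0) (by simp) ?_ ?_
    · rintro y (⟨rfl | rfl⟩ | ⟨j, rfl⟩)
      · rw [hi]; simp
      · obtain ⟨j, hj⟩ := out_pv a hpne
        rw [hj]; exact Or.inr ⟨j, rfl⟩
      · have : (blv i j : BV k n) ≠ a.root := by
          rw [h]; simp [blv]; intro hq _; exact hii hq
        rw [out_leaf a this]; simp
    · rw [h]; rintro (⟨h1 | h1⟩ | ⟨j, h1⟩) <;> simp_all [bv0, bpv, blv]

lemma out_pv_root_lv {i0 : Fin k} {j0 : Fin (n i0)} (h : a.root = blv i0 j0) :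
    a.out (bpv i0) = blv i0 j0 := by
  have hpne : (bpv i0 : BV k n) ≠ a.root := by rw [h]; simp [bpv, blv]
  obtain ⟨j, hj⟩ := out_pv a hpne
  rcases eq_or_ne j j0 with rfl | hjj
  · exact hj
  · exfalso
    refine a.no_closed (C := {bv0} ∪ {bpv i0} ∪ {blv i0 j})
      (x := bpv i0) (by simp) ?_ ?_
    · rintro y (⟨rfl | rfl⟩ | rfl)
      · rw [out_v0_root_lv a h]; simp
      · rw [hj]; simp
      · have : (blv i0 j : BV k n) ≠ a.root := by
          rw [h]; simp [blv]; intro hq; exact hjj (by simpa using hq)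
        rw [out_leaf a this]; simp
    · rw [h]; rintro (⟨h1 | h1⟩ | h1)
      · simp_all [bv0, blv]
      · simp_all [bpv, blv]
      · exact hjj (blv_inj h1).symm

end TreeLemmas


section ExplorationGeneric
variable {V : Type*} [Fintype V] {E : V → V → Prop} (ord : LinearOrder V) (a : SpTree E)

lemma expStep_nil {s : ExpState V} (h : s.Lq = []) : expStep ord a s = s := by
  unfold expStep; rw [h]

lemma iterate_stable {s : ExpState V} {m N : ℕ} (hmN : m ≤ N)
    (h : ((expStep ord a)^[m] s).Lq = []) :
    (expStep ord a)^[N] s = (expStep ord a)^[m] s := by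
  obtain ⟨p, rfl⟩ := Nat.exists_eq_add_of_le hmN
  rw [add_comm, Function.iterate_add_apply]
  induction p with
  | zero => rfl
  | succ p ih => rw [Function.iterate_succ_apply', ih (by omega), expStep_nil ord a h]

lemma expStep_cons_inTree {s : ExpState V} {e : V × V} {rest : List (V × V)}
    (hL : s.Lq = e :: rest) (h : inTree a e) :
    expStep ord a s =
      { A := insert e.1 s.A
        Lq := rest.filter (fun f => decide (f.1 ≠ e.1)) ++ sortedTo ord s.F e.1
        F := s.F
        Er := s.Er } := by
  unfold expStep; rw [hL]; simp [h]

lemma expStep_cons_notInTree {s : ExpState V} {e : V × V} {rest : List (V × V)}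
    (hL : s.Lq = e :: rest) (h : ¬ inTree a e) :
    expStep ord a s =
      { A := s.A
        Lq := rest.filter (fun f => decide (f.1 ≠ e.1 ∧ f.2 ≠ e.1))
        F := s.F.filter (fun f => f.1 ≠ e.1 ∧ f.2 ≠ e.1)
        Er := insert e.1 s.Er } := by
  unfold expStep; rw [hL]; simp [h]

lemma mem_sortedTo {S : Finset (V × V)} {w : V} {e : V × V} :
    e ∈ sortedTo ord S w ↔ e ∈ S ∧ e.2 = w := by
  letI := ord
  unfold sortedTo
  simp only [List.mem_map, Finset.mem_sort, Finset.mem_image, Finset.mem_filter]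
  constructor
  · rintro ⟨x, ⟨f, ⟨hf, h2⟩, h1⟩, rfl⟩
    have : f = (x, w) := by rw [← h1, ← h2]
    rw [← this]; exact ⟨hf, by rw [this]⟩
  · rintro ⟨he, h2⟩
    exact ⟨e.1, ⟨e, ⟨he, h2⟩, rfl⟩, by rw [← h2]⟩

lemma sortedTo_subsingleton {S : Finset (V × V)} {w u : V} [Decidable ((u, w) ∈ S)]
    (hsub : ∀ f ∈ S, f.2 = w → f = (u, w)) :
    sortedTo ord S w = if (u, w) ∈ S then [(u, w)] else [] := by
  letI := ord
  unfold sortedTo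
  split_ifs with h
  · have himg : ((S.filter (fun f => f.2 = w)).image Prod.fst) = {u} := by
      ext x
      simp only [Finset.mem_image, Finset.mem_filter, Finset.mem_singleton]
      constructor
      · rintro ⟨f, ⟨hf, hf2⟩, rfl⟩; rw [hsub f hf hf2]
      · rintro rfl; exact ⟨_, ⟨h, rfl⟩, rfl⟩
    rw [himg, Finset.sort_singleton]; rfl
  · have himg : ((S.filter (fun f => f.2 = w)).image Prod.fst) = ∅ := by
      ext x
      simp only [Finset.mem_image, Finset.mem_filter, Finset.notMem_empty, iff_false,
        not_exists]
      rintro f ⟨⟨hf, hf2⟩, rfl⟩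
      exact h (hsub f hf hf2 ▸ hf)
    rw [himg, Finset.sort_empty]; rfl

lemma expInit_Lq_map {S : Finset V} (h : ∀ x, E x a.root ↔ x ∈ S) :
    (expInit ord a).Lq =
      (letI := ord; (S.sort (· ≤ ·)).map (fun u => (u, a.root))) := by
  letI := ord
  unfold expInit
  show ((univ.filter (fun u => E u a.root)).sort (· ≤ ·)).map (fun u => (u, a.root)) = _
  have h1 : (univ.filter (fun u => E u a.root)) = S := by
    ext x
    simp [h x]
  rw [h1]

end ExplorationGeneric

lemma List.filter_flatMap' {α β : Type*} (l : List α) (f : α → List β) (p : β → Bool) :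
    (l.flatMap f).filter p = l.flatMap fun u => (f u).filter p := by
  induction l with
  | nil => rfl
  | cons u l ih => simp [List.flatMap_cons, List.filter_append, ih]

lemma List.flatMap_congr' {α β : Type*} {l : List α} {f g : α → List β}
    (h : ∀ u ∈ l, f u = g u) : l.flatMap f = l.flatMap g := by
  induction l with
  | nil => rfl
  | cons u l ih =>
    simp only [List.flatMap_cons, h u (by simp)]
    rw [ih fun u hu => h u (by simp [hu])]


lemma filter_true_of {α : Type*} {p : α → Bool} {l : List α} (h : ∀ x ∈ l, p x = true) :
    l.filter p = l := List.filter_eq_self.mpr h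

lemma filter_false_of {α : Type*} {p : α → Bool} {l : List α} (h : ∀ x ∈ l, p x = false) :
    l.filter p = [] := by
  rw [List.filter_eq_nil_iff]
  intro x hx
  simp [h x hx]

section BouquetRun
variable [Fintype (BV k n)]

/-- initial reservoir -/
def F0 (a : SpTree (BE k n)) : Finset (BV k n × BV k n) :=
  univ.filter fun f => BE k n f.1 f.2 ∧ f.1 ≠ a.root

/-- decision data: `none` if petal `i` is the root, otherwise its outgoing edge target -/
def gA (a : SpTree (BE k n)) : Fin k → Option (BV k n) :=
  fun i => if bpv i = a.root then none else some (a.out (bpv i))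

/-- pending petal edge generated by a leaf -/
def pend (a : SpTree (BE k n)) (D : Finset (Fin k)) : BV k n → List (BV k n × BV k n) :=
  fun u => match u with
  | Sum.inr ⟨i, _⟩ => if (gA a i).isSome ∧ i ∉ D then [(bpv i, u)] else []
  | _ => []

/-- the set of explored petals after processing a list of leaves -/
def runS (g : Fin k → Option (BV k n)) : List (BV k n) → Finset (Fin k) → Finset (Fin k)
  | [], _ => ∅
  | u :: q, D =>
    match u with
    | Sum.inr ⟨i, _⟩ =>
      match g i with
      | none => runS g q D
      | some t =>
        if i ∈ D then runS g q D
        else if t = u then insert i (runS g q (insert i D)) else runS g q (insert i D)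
    | _ => runS g q D

lemma runS_nil (g : Fin k → Option (BV k n)) (D : Finset (Fin k)) : runS g [] D = ∅ := rfl

lemma runS_cons_none {g : Fin k → Option (BV k n)} {i : Fin k} (hg : g i = none)
    (j : Fin (n i)) (q : List (BV k n)) (D : Finset (Fin k)) :
    runS g (blv i j :: q) D = runS g q D := by
  simp [runS, hg]

lemma runS_cons_mem {g : Fin k → Option (BV k n)} {i : Fin k} {t : BV k n}
    (hg : g i = some t) {D : Finset (Fin k)} (hiD : i ∈ D) (j : Fin (n i))
    (q : List (BV k n)) : runS g (blv i j :: q) D = runS g q D := by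
  simp [runS, hg, hiD]

lemma runS_cons_hit {g : Fin k → Option (BV k n)} {i : Fin k} {t : BV k n}
    (hg : g i = some t) {D : Finset (Fin k)} (hiD : i ∉ D) {j : Fin (n i)}
    (ht : t = blv i j) (q : List (BV k n)) :
    runS g (blv i j :: q) D = insert i (runS g q (insert i D)) := by
  simp [runS, hg, hiD, ht]

lemma runS_cons_miss {g : Fin k → Option (BV k n)} {i : Fin k} {t : BV k n}
    (hg : g i = some t) {D : Finset (Fin k)} (hiD : i ∉ D) {j : Fin (n i)}
    (ht : t ≠ blv i j) (q : List (BV k n)) :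
    runS g (blv i j :: q) D = runS g q (insert i D) := by
  simp [runS, hg, hiD, ht]

/-- filtering away the petal edges of petal `i` (by source) -/
lemma flatMap_pend_src {a : SpTree (BE k n)} {D : Finset (Fin k)} (i : Fin k)
    {p : BV k n × BV k n → Bool} {q : List (BV k n)}
    (hq : ∀ u ∈ q, ∃ i' j', u = blv i' j')
    (hp : ∀ f, p f = true ↔ f.1 ≠ (bpv i : BV k n)) :
    (q.flatMap fun u => (pend a D u).filter p) = q.flatMap (pend a (insert i D)) := by
  refine List.flatMap_congr' ?_
  intro u hu
  obtain ⟨i', j', rfl⟩ := hq u hu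
  by_cases hsome : (gA a i').isSome
  · by_cases hD : i' ∈ D
    · have h2 : i' ∈ insert i D := Finset.mem_insert_of_mem hD
      simp [pend, hD, h2]
    · rcases eq_or_ne i' i with rfl | hne
      · have hpf : p (bpv i', blv i' j') = false := by
          rw [← Bool.not_eq_true, hp]; simp
        simp [pend, hsome, hD, hpf]
      · have hpt : p (bpv i', blv i' j') = true := by rw [hp]; simp [hne]
        have h2 : i' ∉ insert i D := by simp [hne, hD]
        simp [pend, hsome, hD, h2, hpt]
  · simp [pend, hsome]

/-- filtering away the petal edges of petal `i` (by source or target) -/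
lemma flatMap_pend_both {a : SpTree (BE k n)} {D : Finset (Fin k)} (i : Fin k)
    {p : BV k n × BV k n → Bool} {q : List (BV k n)}
    (hq : ∀ u ∈ q, ∃ i' j', u = blv i' j')
    (hp : ∀ f, p f = true ↔ (f.1 ≠ (bpv i : BV k n) ∧ f.2 ≠ (bpv i : BV k n))) :
    (q.flatMap fun u => (pend a D u).filter p) = q.flatMap (pend a (insert i D)) := by
  refine List.flatMap_congr' ?_
  intro u hu
  obtain ⟨i', j', rfl⟩ := hq u hu
  by_cases hsome : (gA a i').isSome
  · by_cases hD : i' ∈ D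
    · have h2 : i' ∈ insert i D := Finset.mem_insert_of_mem hD
      simp [pend, hD, h2]
    · rcases eq_or_ne i' i with rfl | hne
      · have hpf : p (bpv i', blv i' j') = false := by
          rw [← Bool.not_eq_true, hp]; simp
        simp [pend, hsome, hD, hpf]
      · have hpt : p (bpv i', blv i' j') = true := by rw [hp]; simp [hne]
        have h2 : i' ∉ insert i D := by simp [hne, hD]
        simp [pend, hsome, hD, h2, hpt]
  · simp [pend, hsome]

variable (ord : LinearOrder (BV k n)) (a : SpTree (BE k n))

lemma leafPhase (ls : List (BV k n)) (suf : List (BV k n × BV k n)) (s : ExpState (BV k n))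
    (hnd : ls.Nodup)
    (hls : ∀ u ∈ ls, (∃ i j, u = blv i j) ∧ u ≠ a.root)
    (hsuf : ∀ e ∈ suf, ∃ i, e.1 = bpv i)
    (hL : s.Lq = ls.map (fun u => (u, bv0)) ++ suf)
    (hF : s.F = F0 a) :
    (expStep ord a)^[ls.length] s =
      { A := s.A ∪ ls.toFinset
        Lq := suf ++ ls.flatMap (fun u => sortedTo ord (F0 a) u)
        F := F0 a
        Er := s.Er } := by
  induction ls generalizing suf s hsuf hF with
  | nil =>
    cases s with
    | mk A L F Er => simp_all
  | cons u tl ih =>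
    obtain ⟨⟨i, j, rfl⟩, hur⟩ := hls u (by simp)
    have hstep : expStep ord a s =
        { A := insert (blv i j) s.A
          Lq := tl.map (fun u => (u, bv0)) ++ (suf ++ sortedTo ord (F0 a) (blv i j))
          F := F0 a
          Er := s.Er } := by
      rw [expStep_cons_inTree ord a (e := (blv i j, bv0))
        (rest := tl.map (fun u => (u, bv0)) ++ suf) (by simpa using hL)
        ⟨hur, out_leaf a hur⟩, hF]
      congr 1
      · ext x; simp
      rw [List.filter_append, filter_true_of, filter_true_of, List.append_assoc]
      · intro e he
        obtain ⟨i', hi'⟩ := hsuf e he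
        simp [hi']
      · intro e he
        simp only [List.mem_map] at he
        obtain ⟨u, hu, rfl⟩ := he
        have : u ≠ blv i j := by rintro rfl; exact (List.nodup_cons.mp hnd).1 hu
        simpa using this
    have hsuf' : ∀ e ∈ suf ++ sortedTo ord (F0 a) (blv i j), ∃ i', e.1 = bpv i' := by
      intro e he
      rcases List.mem_append.mp he with h | h
      · exact hsuf e h
      · obtain ⟨heS, h2⟩ := (mem_sortedTo ord).mp h
        have hbe : BE k n e.1 e.2 := (Finset.mem_filter.mp heS).2.1
        rw [h2] at hbe
        exact ⟨i, BE_into_lv.mp hbe⟩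
    have hmain := ih (suf ++ sortedTo ord (F0 a) (blv i j))
      { A := insert (blv i j) s.A
        Lq := tl.map (fun u => (u, bv0)) ++ (suf ++ sortedTo ord (F0 a) (blv i j))
        F := F0 a
        Er := s.Er }
      (List.nodup_cons.mp hnd).2 (fun u hu => hls u (by simp [hu])) hsuf' rfl rfl
    rw [List.length_cons, Function.iterate_succ_apply, hstep, hmain]
    simp [List.flatMap_cons, Finset.union_insert, Finset.insert_union, List.append_assoc]

lemma petalPhase (q : List (BV k n)) (ves : List (BV k n × BV k n))
    (Dx S : Finset (Fin k)) (A1 : Finset (BV k n)) (s : ExpState (BV k n))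
    (hgr : ∀ i t, gA a i = some t → a.out bv0 = bpv i → t = a.root)
    (hq : ∀ u ∈ q, (∃ i j, u = blv i j) ∧ u ≠ a.root)
    (hves : ∀ e ∈ ves, ∃ i' ∈ S, e = ((bv0 : BV k n), bpv i') ∧ a.out bv0 ≠ bpv i')
    (hA : s.A = A1 ∪ S.image bpv)
    (hF : s.F = (F0 a).filter (fun f => ∀ i' ∈ Dx, f.1 ≠ bpv i' ∧ f.2 ≠ bpv i'))
    (hL : s.Lq = q.flatMap (pend a (Dx ∪ S)) ++ ves) :
    ∃ m ≤ q.length + 1, ((expStep ord a)^[m] s).Lq = [] ∧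
      ((expStep ord a)^[m] s).A = A1 ∪ (S ∪ runS (gA a) q (Dx ∪ S)).image bpv := by
  induction q generalizing ves Dx S s hves hA hF with
  | nil =>
    simp only [List.flatMap_nil, List.nil_append] at hL
    cases ves with
    | nil =>
      refine ⟨0, by omega, by simpa using hL, by simp [hA, runS_nil]⟩
    | cons e rest =>
      obtain ⟨i', hi'S, rfl, hout⟩ := hves e (by simp)
      have hnotin : ¬ inTree a ((bv0 : BV k n), bpv i') := by
        rintro ⟨-, h2⟩; exact hout h2
      have hstep := expStep_cons_notInTree ord a hL hnotin
      refine ⟨1, by omega, ?_, ?_⟩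
      · rw [Function.iterate_one, hstep]
        show List.filter _ rest = []
        refine filter_false_of ?_
        intro e he
        obtain ⟨i'', hi''S, rfl, -⟩ := hves e (by simp [he])
        simp
      · rw [Function.iterate_one, hstep]
        show s.A = _
        simp [hA, runS_nil]
  | cons u q' ih =>
    obtain ⟨⟨i, j, rfl⟩, hur⟩ := hq u (by simp)
    rw [List.flatMap_cons] at hL
    rcases hgA : gA a i with _ | t
    · have hpend : pend a (Dx ∪ S) (blv i j) = [] := by simp [pend, hgA]
      obtain ⟨m, hm, h1, h2⟩ := ih ves Dx S s (fun u hu => hq u (by simp [hu])) hves hA hF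
        (by rw [hL, hpend, List.nil_append])
      exact ⟨m, by simp only [List.length_cons]; omega, h1,
        by rw [h2, runS_cons_none hgA]⟩
    · have hproot : (bpv i : BV k n) ≠ a.root ∧ t = a.out (bpv i) := by
        unfold gA at hgA
        split_ifs at hgA with h
        exact ⟨h, by injection hgA with h'; exact h'.symm⟩
      by_cases hiD : i ∈ Dx ∪ S
      · have hpend : pend a (Dx ∪ S) (blv i j) = [] := by simp [pend, hgA, hiD]
        obtain ⟨m, hm, h1, h2⟩ := ih ves Dx S s (fun u hu => hq u (by simp [hu])) hves hA hF
          (by rw [hL, hpend, List.nil_append])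
        exact ⟨m, by simp only [List.length_cons]; omega, h1,
          by rw [h2, runS_cons_mem hgA hiD]⟩
      · have hpend : pend a (Dx ∪ S) (blv i j) = [(bpv i, blv i j)] := by
          simp [pend, hgA, hiD]
        rw [hpend, List.singleton_append, List.cons_append] at hL
        by_cases hti : t = blv i j
        · -- explored petal
          have hout : a.out (bpv i) = blv i j := by rw [← hproot.2, hti]
          have hsub : ∀ f ∈ s.F, f.2 = (bpv i : BV k n) → f = (bv0, bpv i) := by
            intro f hf h2
            rw [hF] at hf
            have hbe : BE k n f.1 f.2 := (Finset.mem_filter.mp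
              ((Finset.mem_filter.mp hf).1)).2.1
            rw [h2] at hbe
            exact Prod.ext (BE_into_pv.mp hbe) h2
          have hsorted := sortedTo_subsingleton ord hsub
          have hstep : expStep ord a s =
              { A := insert (bpv i) s.A
                Lq := q'.flatMap (pend a (Dx ∪ insert i S))
                  ++ (ves ++ sortedTo ord s.F (bpv i))
                F := s.F
                Er := s.Er } := by
            rw [expStep_cons_inTree ord a hL ⟨hproot.1, hout⟩]
            congr 1
            · ext x; simp
            rw [List.filter_append, List.filter_flatMap',
              flatMap_pend_src i (fun u hu => (hq u (by simp [hu])).1) (fun f => by simp),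
              filter_true_of, List.append_assoc, Finset.union_insert]
            intro e he
            obtain ⟨i'', hi''S, rfl, -⟩ := hves e he
            simp
          have hves' : ∀ e ∈ ves ++ sortedTo ord s.F (bpv i),
              ∃ i' ∈ insert i S, e = ((bv0 : BV k n), bpv i') ∧ a.out bv0 ≠ bpv i' := by
            intro e he
            rcases List.mem_append.mp he with h | h
            · obtain ⟨i'', hi'', h1, h2⟩ := hves e h
              exact ⟨i'', Finset.mem_insert_of_mem hi'', h1, h2⟩
            · rw [hsorted] at h
              split_ifs at h with hmem
              · simp only [List.mem_singleton] at h
                subst h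
                refine ⟨i, Finset.mem_insert_self _ _, rfl, ?_⟩
                intro hcon
                have hroot := hgr i t hgA hcon
                rw [hti] at hroot
                exact hur hroot
              · simp at h
          obtain ⟨m, hm, h1, h2⟩ := ih
            (ves ++ sortedTo ord s.F (bpv i)) Dx (insert i S) (expStep ord a s)
            (fun u hu => hq u (by simp [hu])) hves'
            (by rw [hstep]
                show insert (bpv i) s.A = _
                rw [hA, Finset.image_insert, Finset.union_insert])
            (by rw [hstep]; exact hF)
            (by rw [hstep])
          refine ⟨m + 1, by simp only [List.length_cons]; omega, ?_, ?_⟩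
          · rw [Function.iterate_succ_apply]; exact h1
          · rw [Function.iterate_succ_apply, h2, runS_cons_hit hgA hiD hti,
              Finset.union_insert, Finset.union_insert, Finset.insert_union]
        · -- erased petal
          have hnotT : ¬ inTree a ((bpv i : BV k n), blv i j) := by
            rintro ⟨-, h2⟩
            exact hti (by rw [hproot.2]; exact h2)
          have hstep : expStep ord a s =
              { A := s.A
                Lq := q'.flatMap (pend a (insert i Dx ∪ S)) ++ ves
                F := s.F.filter (fun f => f.1 ≠ (bpv i : BV k n) ∧ f.2 ≠ (bpv i : BV k n))
                Er := insert (bpv i) s.Er } := by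
            rw [expStep_cons_notInTree ord a hL hnotT]
            congr 1
            · rw [List.filter_append, List.filter_flatMap',
                flatMap_pend_both i (fun u hu => (hq u (by simp [hu])).1) (fun f => by simp),
                filter_true_of, Finset.insert_union]
              intro e he
              obtain ⟨i'', hi''S, rfl, -⟩ := hves e he
              have hne : i'' ≠ i := by rintro rfl; exact hiD (Finset.mem_union_right _ hi''S)
              simp [hne]
            · ext f; simp
            · ext x; simp
          have hF' : s.F.filter (fun f => f.1 ≠ (bpv i : BV k n) ∧ f.2 ≠ (bpv i : BV k n))
              = (F0 a).filter (fun f => ∀ i' ∈ insert i Dx, f.1 ≠ bpv i' ∧ f.2 ≠ bpv i') := by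
            rw [hF, Finset.filter_filter]
            refine Finset.filter_congr ?_
            intro f hf
            constructor
            · rintro ⟨hall, h1, h2⟩
              intro i'' hi''
              rcases Finset.mem_insert.mp hi'' with rfl | hi''
              · exact ⟨h1, h2⟩
              · exact hall i'' hi''
            · intro hall
              exact ⟨fun i'' hi'' => hall i'' (Finset.mem_insert_of_mem hi''),
                (hall i (Finset.mem_insert_self _ _)).1,
                (hall i (Finset.mem_insert_self _ _)).2⟩
          obtain ⟨m, hm, h1, h2⟩ := ih
            ves (insert i Dx) S (expStep ord a s) (fun u hu => hq u (by simp [hu])) hves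
            (by rw [hstep]; exact hA)
            (by rw [hstep]; exact hF')
            (by rw [hstep])
          refine ⟨m + 1, by simp only [List.length_cons]; omega, ?_, ?_⟩
          · rw [Function.iterate_succ_apply]; exact h1
          · rw [Function.iterate_succ_apply, h2, runS_cons_miss hgA hiD hti,
              Finset.insert_union]

end BouquetRun
section BouquetPhi
variable [Fintype (BV k n)]

/-- petal index of the root -/
def rootIdx : BV k n → Finset (Fin k) := fun r =>
  match r with
  | Sum.inl none => ∅
  | Sum.inl (some i) => {i}
  | Sum.inr ⟨i, _⟩ => {i}

variable (ord : LinearOrder (BV k n))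

/-- the sorted list of the leaves distinct from `w` -/
def lsW (w : BV k n) : List (BV k n) :=
  letI := ord
  ((univ.filter (fun u => (∃ i j, u = blv i j) ∧ u ≠ w)).sort (fun x y => @LE.le _ ord.toLE x y))

lemma lsW_nodup (w : BV k n) : (lsW ord w).Nodup := by
  unfold lsW
  exact Finset.sort_nodup _ _

lemma mem_lsW {w u : BV k n} : u ∈ lsW ord w ↔ (∃ i j, u = blv i j) ∧ u ≠ w := by
  unfold lsW
  rw [Finset.mem_sort]
  simp

variable (a : SpTree (BE k n))

lemma mem_F0 {f : BV k n × BV k n} : f ∈ F0 a ↔ BE k n f.1 f.2 ∧ f.1 ≠ a.root := by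
  unfold F0
  simp

lemma expInit_F : (expInit ord a).F = F0 a := by
  ext f
  rw [mem_F0]
  simp [expInit]

lemma expInit_A : (expInit ord a).A = {a.root} := rfl

lemma expInit_Er : (expInit ord a).Er = ∅ := rfl

lemma gA_isSome {i : Fin k} : (gA a i).isSome ↔ (bpv i : BV k n) ≠ a.root := by
  unfold gA
  split_ifs with h
  · simp [h]
  · simp [h]

lemma gA_eq_some {i : Fin k} (h : (bpv i : BV k n) ≠ a.root) :
    gA a i = some (a.out (bpv i)) := by
  unfold gA
  rw [if_neg h]

lemma sortedTo_F0_lv (i : Fin k) (j : Fin (n i)) :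
    sortedTo ord (F0 a) (blv i j) =
      if (bpv i, blv i j) ∈ F0 a then [(bpv i, blv i j)] else [] := by
  refine sortedTo_subsingleton ord ?_
  intro f hf h2
  have hbe : BE k n f.1 f.2 := (mem_F0 a).mp hf |>.1
  rw [h2] at hbe
  exact Prod.ext (BE_into_lv.mp hbe) h2

lemma flatMap_sortedTo_pend (ls : List (BV k n)) (hls : ∀ u ∈ ls, ∃ i j, u = blv i j) :
    ls.flatMap (fun u => sortedTo ord (F0 a) u) = ls.flatMap (pend a ∅) := by
  refine List.flatMap_congr' ?_
  intro u hu
  obtain ⟨i, j, rfl⟩ := hls u hu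
  rw [sortedTo_F0_lv ord a i j]
  by_cases hmem : ((bpv i, blv i j) : BV k n × BV k n) ∈ F0 a
  · rw [if_pos hmem]
    have hs : (gA a i).isSome := (gA_isSome a).mpr ((mem_F0 a).mp hmem).2
    simp [pend, hs]
  · rw [if_neg hmem]
    have hs : ¬ (gA a i).isSome := by
      rw [gA_isSome a]
      intro hne
      exact hmem ((mem_F0 a).mpr ⟨BE_pl i j, hne⟩)
    simp [pend, hs]

lemma sortedTo_F0_pv (i : Fin k) :
    sortedTo ord (F0 a) (bpv i) =
      if (bv0, bpv i) ∈ F0 a then [((bv0 : BV k n), bpv i)] else [] := by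
  refine sortedTo_subsingleton ord ?_
  intro f hf h2
  have hbe : BE k n f.1 f.2 := (mem_F0 a).mp hf |>.1
  rw [h2] at hbe
  exact Prod.ext (BE_into_pv.mp hbe) h2

lemma sortedTo_F0_v0 : sortedTo ord (F0 a) bv0 = (lsW ord a.root).map (fun u => (u, bv0)) := by
  unfold sortedTo lsW
  refine congrArg (List.map _) (congrArg (fun s => Finset.sort s (fun x y => @LE.le _ ord.toLE x y)) ?_)
  ext u
  simp only [Finset.mem_image, Finset.mem_filter, Finset.mem_univ, true_and]
  constructor
  · rintro ⟨f, ⟨hf, h2⟩, rfl⟩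
    obtain ⟨hbe, hne⟩ := (mem_F0 a).mp hf
    rw [h2] at hbe
    exact ⟨BE_into_v0.mp hbe, hne⟩
  · rintro ⟨⟨i, j, rfl⟩, hne⟩
    exact ⟨(blv i j, bv0), ⟨(mem_F0 a).mpr ⟨BE_lv0 i j, hne⟩, rfl⟩, rfl⟩

lemma hgr_all : ∀ i t, gA a i = some t → a.out bv0 = bpv i → t = a.root := by
  intro i t hgt hvo
  rcases hr : a.root with (_ | i0) | ⟨i0, j0⟩
  · have h0 := a.out_root
    rw [hr] at h0
    rw [h0] at hvo
    exact absurd hvo (by simp)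
  · have h0 := out_v0_root_pv a hr
    rw [h0] at hvo
    have : i0 = i := by simpa using hvo
    subst this
    have hnone : gA a i0 = none := by simp [gA, hr]
    rw [hnone] at hgt
    exact absurd hgt (by simp)
  · have h0 := out_v0_root_lv a hr
    rw [h0] at hvo
    have : i0 = i := by simpa using hvo
    subst this
    have h1 : (bpv i0 : BV k n) ≠ a.root := by rw [hr]; simp
    rw [gA_eq_some a h1] at hgt
    injection hgt with h2
    rw [← h2, out_pv_root_lv a hr]

/-- running the algorithm from a state about to enter the leaf phase -/
lemma runTail (c : ℕ) (hc : c ≤ 2) (s : ExpState (BV k n)) (A1 : Finset (BV k n))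
    (hs : (expStep ord a)^[c] (expInit ord a) = s)
    (hA : s.A = A1)
    (hL : s.Lq = (lsW ord a.root).map (fun u => (u, bv0)))
    (hF : s.F = F0 a) :
    expPhi ord a = (A1 ∪ (lsW ord a.root).toFinset)
      ∪ (runS (gA a) (lsW ord a.root) ∅).image bpv := by
  set ls := lsW ord a.root with hls_def
  have hmem : ∀ u ∈ ls, (∃ i j, u = blv i j) ∧ u ≠ a.root := by
    intro u hu
    exact (mem_lsW ord).mp hu
  have h1 := leafPhase ord a ls [] s (lsW_nodup ord _) hmem (by simp)
    (by rw [hL, List.append_nil]) hF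
  have h2 := petalPhase ord a ls [] ∅ ∅ (A1 ∪ ls.toFinset)
    ((expStep ord a)^[ls.length] s) (hgr_all a) hmem (by simp)
    (by rw [h1]; show s.A ∪ ls.toFinset = _; rw [hA]; simp)
    (by rw [h1]; show F0 a = _
        refine (Finset.filter_true_of_mem ?_).symm
        intro f hf
        simp)
    (by rw [h1]; show [] ++ _ = _
        rw [List.nil_append, flatMap_sortedTo_pend ord a ls (fun u hu => (hmem u hu).1)]
        simp)
  obtain ⟨m, hm, hLq, hA'⟩ := h2
  rw [← Function.iterate_add_apply] at hLq hA'
  rw [← hs, ← Function.iterate_add_apply] at hLq hA'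
  have hcard : ls.length + 1 ≤ Fintype.card (BV k n) := by
    have h3 : insert (bv0 : BV k n) ls.toFinset ⊆ univ := Finset.subset_univ _
    have h4 : (bv0 : BV k n) ∉ ls.toFinset := by
      intro h
      obtain ⟨⟨i, j, hij⟩, -⟩ := hmem bv0 (List.mem_toFinset.mp h)
      exact absurd hij (by simp)
    have h5 := Finset.card_le_card h3
    rw [Finset.card_insert_of_notMem h4, List.toFinset_card_of_nodup (lsW_nodup ord _),
      Finset.card_univ] at h5
    exact h5
  have hbound : m + ls.length + c ≤ 2 * Fintype.card (BV k n × BV k n) + 1 := by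
    have h6 : Fintype.card (BV k n × BV k n)
        = Fintype.card (BV k n) * Fintype.card (BV k n) := Fintype.card_prod _ _
    have h7 : Fintype.card (BV k n) ≤ Fintype.card (BV k n) * Fintype.card (BV k n) :=
      Nat.le_mul_of_pos_left _ (by omega)
    omega
  have hstable := iterate_stable ord a hbound hLq
  unfold expPhi expRun
  rw [hstable, hA']
  simp [Finset.empty_union, Finset.union_assoc]

theorem expPhi_eq : expPhi ord a =
    (({a.root, bv0} : Finset (BV k n)) ∪ (lsW ord a.root).toFinset)
      ∪ (runS (gA a) (lsW ord a.root) ∅ ∪ rootIdx a.root).image bpv := by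
  rcases hr : a.root with (_ | i0) | ⟨i0, j0⟩
  · -- root is the center
    have hL0 : (expInit ord a).Lq = (lsW ord a.root).map (fun u => (u, bv0)) := by
      rw [expInit_Lq_map ord a
        (S := univ.filter (fun u => (∃ i j, u = blv i j) ∧ u ≠ a.root))
        (by intro x
            simp only [Finset.mem_filter, Finset.mem_univ, true_and]
            rw [hr]
            constructor
            · intro h
              obtain ⟨i, j, rfl⟩ := BE_into_v0.mp h
              exact ⟨⟨i, j, rfl⟩, by simp⟩
            · rintro ⟨⟨i, j, rfl⟩, -⟩
              exact BE_lv0 i j)]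
      unfold lsW
      rw [hr]
    have hrun := runTail ord a 0 (by omega) (expInit ord a) {a.root} rfl
      (expInit_A ord a) hL0 (expInit_F ord a)
    rw [hrun, hr, show rootIdx (Sum.inl none : BV k n) = ∅ from rfl, Finset.union_empty]
    ext x
    simp only [Finset.mem_union, Finset.mem_insert, Finset.mem_singleton, bv0]
    tauto
  · -- root is a petal
    have hL0 : (expInit ord a).Lq = [((bv0 : BV k n), a.root)] := by
      rw [expInit_Lq_map ord a (S := ({bv0} : Finset (BV k n)))
        (by intro x
            rw [hr]
            simp only [Finset.mem_singleton]
            exact ⟨fun h => BE_into_pv.mp h, fun h => h ▸ BE_0p i0⟩)]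
      rw [Finset.sort_singleton]
      rfl
    have hin : inTree a ((bv0 : BV k n), a.root) := by
      constructor
      · show (bv0 : BV k n) ≠ a.root
        rw [hr]; simp
      · show a.out bv0 = a.root
        rw [hr]; exact out_v0_root_pv a hr
    have hstep := expStep_cons_inTree ord a hL0 hin
    have hrun := runTail ord a 1 (by omega) (expStep ord a (expInit ord a))
      {a.root, bv0}
      rfl
      (by rw [hstep, expInit_A]
          ext x
          simp only [Finset.mem_insert, Finset.mem_singleton]
          tauto)
      (by rw [hstep]
          show List.filter _ [] ++ sortedTo ord (expInit ord a).F bv0 = _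
          rw [List.filter_nil, List.nil_append, expInit_F]
          exact sortedTo_F0_v0 ord a)
      (by rw [hstep]; exact expInit_F ord a)
    rw [hrun, hr, show rootIdx (Sum.inl (some i0) : BV k n) = {i0} from rfl,
      Finset.image_union, Finset.image_singleton]
    ext x
    simp only [Finset.mem_union, Finset.mem_insert, Finset.mem_singleton, bpv]
    tauto
  · -- root is a leaf
    have hL0 : (expInit ord a).Lq = [((bpv i0 : BV k n), a.root)] := by
      rw [expInit_Lq_map ord a (S := ({bpv i0} : Finset (BV k n)))
        (by intro x
            rw [hr]
            simp only [Finset.mem_singleton]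
            exact ⟨fun h => BE_into_lv.mp h, fun h => h ▸ BE_pl i0 j0⟩)]
      rw [Finset.sort_singleton]
      rfl
    have hin : inTree a ((bpv i0 : BV k n), a.root) := by
      constructor
      · show (bpv i0 : BV k n) ≠ a.root
        rw [hr]; simp
      · show a.out (bpv i0) = a.root
        rw [hr]; exact out_pv_root_lv a hr
    have hstep := expStep_cons_inTree ord a hL0 hin
    have hmemF : ((bv0, bpv i0) : BV k n × BV k n) ∈ F0 a := by
      refine (mem_F0 a).mpr ⟨BE_0p i0, ?_⟩
      rw [hr]; simp
    have hL1 : (expStep ord a (expInit ord a)).Lq = [((bv0 : BV k n), bpv i0)] := by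
      rw [hstep]
      show List.filter _ [] ++ sortedTo ord (expInit ord a).F (bpv i0) = _
      rw [List.filter_nil, List.nil_append, expInit_F, sortedTo_F0_pv ord a i0,
        if_pos hmemF]
    have hin1 : inTree a ((bv0 : BV k n), bpv i0) := by
      constructor
      · show (bv0 : BV k n) ≠ a.root
        rw [hr]; simp
      · exact out_v0_root_lv a hr
    have hstep1 := expStep_cons_inTree ord a hL1 hin1
    have hrun := runTail ord a 2 (by omega)
      (expStep ord a (expStep ord a (expInit ord a)))
      (insert (bv0 : BV k n) (insert (bpv i0) {a.root}))
      rfl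
      (by rw [hstep1, hstep, expInit_A]
          ext x
          simp only [Finset.mem_insert, Finset.mem_singleton])
      (by rw [hstep1]
          show List.filter _ [] ++ sortedTo ord (expStep ord a (expInit ord a)).F bv0 = _
          rw [List.filter_nil, List.nil_append, hstep]
          show sortedTo ord (expInit ord a).F bv0 = _
          rw [expInit_F]
          exact sortedTo_F0_v0 ord a)
      (by rw [hstep1, hstep]; exact expInit_F ord a)
    rw [hrun, hr, show rootIdx (Sum.inr ⟨i0, j0⟩ : BV k n) = {i0} from rfl,
      Finset.image_union, Finset.image_singleton]
    ext x
    simp only [Finset.mem_union, Finset.mem_insert, Finset.mem_singleton, bpv]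
    tauto

end BouquetPhi
section BouquetPsi
variable [Fintype (BV k n)]

lemma mem_WI_v0 {I : Finset (Fin k)} : (bv0 : BV k n) ∈ WI k n I := by
  simp [WI]

lemma mem_WI_pv {I : Finset (Fin k)} {i : Fin k} : (bpv i : BV k n) ∈ WI k n I ↔ i ∈ I := by
  simp [WI]

lemma mem_WI_lv {I : Finset (Fin k)} {i : Fin k} {j : Fin (n i)} :
    (blv i j : BV k n) ∈ WI k n I ↔ i ∈ I := by
  simp [WI]

lemma WI_inj {I I' : Finset (Fin k)} (h : WI k n I = WI k n I') : I = I' := by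
  ext i
  rw [← mem_WI_pv (n := n) (I := I), h, mem_WI_pv]

lemma rootIdx_subset {I : Finset (Fin k)} {w : BV k n} (hw : w ∈ WI k n I) :
    rootIdx w ⊆ I := by
  rcases w with (_ | i0) | ⟨i0, j0⟩
  · simp [rootIdx]
  · intro x hx
    rw [show rootIdx (Sum.inl (some i0) : BV k n) = {i0} from rfl,
      Finset.mem_singleton] at hx
    subst hx
    exact (mem_WI_pv).mp hw
  · intro x hx
    rw [show rootIdx (Sum.inr ⟨i0, j0⟩ : BV k n) = {i0} from rfl,
      Finset.mem_singleton] at hx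
    subst hx
    exact (mem_WI_lv).mp hw

variable (ord : LinearOrder (BV k n)) (a : SpTree (BE k n))

lemma v0_mem_phi : (bv0 : BV k n) ∈ expPhi ord a := by
  rw [expPhi_eq]
  simp

lemma root_mem_phi : a.root ∈ expPhi ord a := by
  rw [expPhi_eq]
  simp

lemma lv_mem_phi (i : Fin k) (j : Fin (n i)) : (blv i j : BV k n) ∈ expPhi ord a := by
  rw [expPhi_eq]
  by_cases h : (blv i j : BV k n) = a.root
  · simp [h]
  · have : (blv i j : BV k n) ∈ lsW ord a.root := (mem_lsW ord).mpr ⟨⟨i, j, rfl⟩, h⟩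
    simp [List.mem_toFinset.mpr this]

lemma pv_mem_phi (i : Fin k) :
    (bpv i : BV k n) ∈ expPhi ord a
      ↔ i ∈ runS (gA a) (lsW ord a.root) ∅ ∪ rootIdx a.root := by
  rw [expPhi_eq]
  simp only [Finset.mem_union, Finset.mem_insert, Finset.mem_singleton, Finset.mem_image,
    List.mem_toFinset]
  constructor
  · rintro (((h | h) | h) | ⟨i', hi', hbp⟩)
    · right
      rw [← h]
      simp [rootIdx]
    · exact absurd h (by simp)
    · obtain ⟨⟨i', j', heq⟩, -⟩ := (mem_lsW ord).mp h
      exact absurd heq (by simp)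
    · have : i' = i := by simpa [bpv] using hbp
      subst this
      exact hi'
  · intro h
    exact Or.inr ⟨i, h, rfl⟩

theorem expPsi_eq (hn : ∀ i, 1 ≤ n i) :
    expPsi ord a = WI k n (runS (gA a) (lsW ord a.root) ∅ ∪ rootIdx a.root) := by
  set I : Finset (Fin k) := runS (gA a) (lsW ord a.root) ∅ ∪ rootIdx a.root with hI
  have hpv : ∀ i, ((bpv i : BV k n) ∈ expPhi ord a ↔ i ∈ I) := fun i => pv_mem_phi ord a i
  have hv0 := v0_mem_phi ord a
  have hlf := lv_mem_phi ord a
  have hwm : ∀ u ∈ WI k n I, u ∈ expPhi ord a := by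
    intro u hu
    match u with
    | Sum.inl none => exact hv0
    | Sum.inl (some i) => exact (hpv i).mpr ((mem_WI_pv).mp hu)
    | Sum.inr ⟨i, j⟩ => exact hlf i j
  have from_v0 : ∀ u ∈ WI k n I, Relation.ReflTransGen
      (fun p q => BE k n p q ∧ p ∈ expPhi ord a ∧ q ∈ expPhi ord a) bv0 u := by
    intro u hu
    match u with
    | Sum.inl none => exact .refl
    | Sum.inl (some i) => exact .single ⟨BE_0p i, hv0, hwm _ hu⟩
    | Sum.inr ⟨i, j⟩ =>
      have hiI : i ∈ I := (mem_WI_lv).mp hu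
      exact Relation.ReflTransGen.head ⟨BE_0p i, hv0, (hpv i).mpr hiI⟩
        (.single ⟨BE_pl i j, (hpv i).mpr hiI, hlf i j⟩)
  have to_v0 : ∀ u ∈ WI k n I, Relation.ReflTransGen
      (fun p q => BE k n p q ∧ p ∈ expPhi ord a ∧ q ∈ expPhi ord a) u bv0 := by
    intro u hu
    match u with
    | Sum.inl none => exact .refl
    | Sum.inl (some i) =>
      have hiI : i ∈ I := (mem_WI_pv).mp hu
      exact Relation.ReflTransGen.head
        ⟨BE_pl i ⟨0, hn i⟩, (hpv i).mpr hiI, hlf i ⟨0, hn i⟩⟩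
        (.single ⟨BE_lv0 i ⟨0, hn i⟩, hlf i ⟨0, hn i⟩, hv0⟩)
    | Sum.inr ⟨i, j⟩ => exact .single ⟨BE_lv0 i j, hlf i j, hv0⟩
  have hrW : a.root ∈ WI k n I := by
    rcases hr : a.root with (_ | i0) | ⟨i0, j0⟩
    · exact mem_WI_v0
    · refine (mem_WI_pv).mpr ?_
      rw [hI]
      exact Finset.mem_union_right _ (by rw [hr]; simp [rootIdx])
    · refine (mem_WI_lv).mpr ?_
      rw [hI]
      exact Finset.mem_union_right _ (by rw [hr]; simp [rootIdx])
  have hclosed : ∀ x ∈ WI k n I, ∀ y, BE k n x y → y ∈ expPhi ord a → y ∈ WI k n I := by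
    intro x hx y hbe hy
    match x with
    | Sum.inl none =>
      obtain ⟨i', rfl⟩ := BE_v0_elim hbe
      exact (mem_WI_pv).mpr ((hpv i').mp hy)
    | Sum.inl (some i) =>
      obtain ⟨j', rfl⟩ := BE_pv_elim hbe
      exact (mem_WI_lv).mpr ((mem_WI_pv).mp hx)
    | Sum.inr ⟨i, j⟩ =>
      have := BE_leaf_elim hbe
      rw [this]
      exact mem_WI_v0
  ext u
  simp only [expPsi, Finset.mem_filter, Finset.mem_univ, true_and]
  constructor
  · rintro ⟨-, hru, -⟩
    induction hru with
    | refl => exact hrW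
    | tail h1 h2 ih => exact hclosed _ ih _ h2.1 h2.2.2
  · intro hu
    refine ⟨hwm u hu, ?_, ?_⟩
    · exact (to_v0 _ hrW).trans (from_v0 u hu)
    · exact (to_v0 u hu).trans (from_v0 _ hrW)

end BouquetPsi
section BouquetCount
variable [Fintype (BV k n)]

/-- the petal index of a leaf vertex -/
def petOf : BV k n → Option (Fin k) := fun u =>
  match u with
  | Sum.inr ⟨i, _⟩ => some i
  | _ => none

/-- the first leaf of petal `i` in the list `q` -/
def firstOcc (q : List (BV k n)) (i : Fin k) : Option (BV k n) :=
  q.find? (fun u => decide (petOf u = some i))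

lemma firstOcc_cons_eq (i : Fin k) (j : Fin (n i)) (q : List (BV k n)) :
    firstOcc (blv i j :: q) i = some (blv i j) := by
  unfold firstOcc
  rw [List.find?_cons_of_pos]
  simp [petOf]

lemma firstOcc_cons_ne {i i' : Fin k} (hne : i ≠ i') (j' : Fin (n i')) (q : List (BV k n)) :
    firstOcc (blv i' j' :: q) i = firstOcc q i := by
  unfold firstOcc
  rw [List.find?_cons_of_neg]
  simp [petOf, Ne.symm hne]

lemma runS_eq_filter (g : Fin k → Option (BV k n)) (q : List (BV k n))
    (hq : ∀ u ∈ q, ∃ i j, u = blv i j) (D : Finset (Fin k)) :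
    runS g q D = univ.filter
      (fun i => i ∉ D ∧ ∃ u, firstOcc q i = some u ∧ g i = some u) := by
  induction q generalizing D with
  | nil =>
    ext i
    simp [runS_nil, firstOcc]
  | cons u q ih =>
    obtain ⟨i', j', rfl⟩ := hq u (by simp)
    have hq' : ∀ u ∈ q, ∃ i j, u = blv i j := fun u hu => hq u (by simp [hu])
    rcases hg : g i' with _ | t
    · rw [runS_cons_none hg, ih hq']
      ext i
      simp only [Finset.mem_filter, Finset.mem_univ, true_and]
      rcases eq_or_ne i i' with rfl | hne
      · simp [firstOcc_cons_eq, hg]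
      · rw [firstOcc_cons_ne hne]
    · by_cases hD : i' ∈ D
      · rw [runS_cons_mem hg hD, ih hq']
        ext i
        simp only [Finset.mem_filter, Finset.mem_univ, true_and]
        rcases eq_or_ne i i' with rfl | hne
        · simp [hD]
        · rw [firstOcc_cons_ne hne]
      · by_cases ht : t = blv i' j'
        · rw [runS_cons_hit hg hD ht, ih hq']
          ext i
          simp only [Finset.mem_insert, Finset.mem_filter, Finset.mem_univ, true_and]
          rcases eq_or_ne i i' with rfl | hne
          · simp [firstOcc_cons_eq, hg, hD, ht]
          · rw [firstOcc_cons_ne hne]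
            simp [hne]
        · rw [runS_cons_miss hg hD ht, ih hq']
          ext i
          simp only [Finset.mem_filter, Finset.mem_univ, true_and, Finset.mem_insert]
          rcases eq_or_ne i i' with rfl | hne
          · simp [firstOcc_cons_eq, hg, hD, ht]
          · rw [firstOcc_cons_ne hne]
            simp [hne]

end BouquetCount
section BouquetCount2
variable [Fintype (BV k n)]

/-- pinned coordinate of the root -/
noncomputable def pinv (hn : ∀ i, 1 ≤ n i) (w : BV k n) (i : Fin k) : Fin (n i) :=
  if h : ∃ j : Fin (n i), w = blv i j then h.choose else ⟨0, hn i⟩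

lemma pinv_lv (hn : ∀ i, 1 ≤ n i) {w : BV k n} {i : Fin k} {j : Fin (n i)}
    (hw : w = blv i j) : pinv hn w i = j := by
  unfold pinv
  rw [dif_pos ⟨j, hw⟩]
  have h2 := (⟨j, hw⟩ : ∃ j' : Fin (n i), w = blv i j').choose_spec
  exact blv_inj (h2.symm.trans hw)

lemma pinv_not_lv (hn : ∀ i, 1 ≤ n i) {w : BV k n} {i : Fin k}
    (hw : ¬ ∃ j : Fin (n i), w = blv i j) : pinv hn w i = ⟨0, hn i⟩ := by
  unfold pinv
  rw [dif_neg hw]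

/-- profile of a tree: the leaf coordinates of the petal edges -/
noncomputable def prof (hn : ∀ i, 1 ≤ n i) (a : SpTree (BE k n)) (i : Fin k) : Fin (n i) :=
  if h : ∃ j : Fin (n i), a.out (bpv i) = blv i j then h.choose else ⟨0, hn i⟩

lemma prof_eq_of (hn : ∀ i, 1 ≤ n i) {a : SpTree (BE k n)} {i : Fin k} {j : Fin (n i)}
    (h : a.out (bpv i) = blv i j) : prof hn a i = j := by
  unfold prof
  rw [dif_pos ⟨j, h⟩]
  have h2 := (⟨j, h⟩ : ∃ j' : Fin (n i), a.out (bpv i) = blv i j').choose_spec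
  exact blv_inj (h2.symm.trans h)

lemma prof_spec (hn : ∀ i, 1 ≤ n i) {a : SpTree (BE k n)} {i : Fin k}
    (h : (bpv i : BV k n) ≠ a.root) : a.out (bpv i) = blv i (prof hn a i) := by
  obtain ⟨j, hj⟩ := out_pv a h
  rw [prof_eq_of hn hj, hj]

lemma prof_root_pv (hn : ∀ i, 1 ≤ n i) {a : SpTree (BE k n)} {i : Fin k}
    (h : a.root = bpv i) : prof hn a i = ⟨0, hn i⟩ := by
  unfold prof
  rw [dif_neg]
  rintro ⟨j, hj⟩
  rw [← h, a.out_root, h] at hj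
  exact absurd hj (by simp)

variable (ord : LinearOrder (BV k n))

/-- the condition on coordinate `i` of the profile for the output to be `W_I` -/
def Qc (hn : ∀ i, 1 ≤ n i) (w : BV k n) (I : Finset (Fin k)) (i : Fin k)
    (x : Fin (n i)) : Prop :=
  if i ∈ rootIdx w then x = pinv hn w i
  else (i ∈ I ↔ firstOcc (lsW ord w) i = some (blv i x))

lemma rootIdx_cases {w : BV k n} {i : Fin k} (h : i ∈ rootIdx w) :
    w = bpv i ∨ ∃ j, w = blv i j := by
  rcases w with (_ | i0) | ⟨i0, j0⟩
  · simp [rootIdx] at h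
  · left
    rw [show rootIdx (Sum.inl (some i0) : BV k n) = {i0} from rfl, Finset.mem_singleton] at h
    subst h
    rfl
  · right
    rw [show rootIdx (Sum.inr ⟨i0, j0⟩ : BV k n) = {i0} from rfl, Finset.mem_singleton] at h
    subst h
    exact ⟨j0, rfl⟩

lemma pv_ne_of_not_rootIdx {w : BV k n} {i : Fin k} (h : i ∉ rootIdx w) :
    (bpv i : BV k n) ≠ w := by
  intro heq
  apply h
  rw [← heq]
  simp [rootIdx]

/-- main condition rewrite -/
lemma cond_iff (hn : ∀ i, 1 ≤ n i) (I : Finset (Fin k)) (w : BV k n) (hw : w ∈ WI k n I)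
    (a : SpTree (BE k n)) (hroot : a.root = w) :
    expPsi ord a = WI k n I ↔ ∀ i, Qc ord hn w I i (prof hn a i) := by
  rw [expPsi_eq ord a hn, hroot,
    show (WI k n (runS (gA a) (lsW ord w) ∅ ∪ rootIdx w) = WI k n I
      ↔ (runS (gA a) (lsW ord w) ∅ ∪ rootIdx w = I)) from ⟨WI_inj, fun h => by rw [h]⟩,
    Finset.ext_iff]
  refine forall_congr' (fun i => ?_)
  rw [runS_eq_filter (gA a) (lsW ord w) (fun u hu => ((mem_lsW ord).mp hu).1) ∅]
  by_cases hiR : i ∈ rootIdx w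
  · have hiI : i ∈ I := rootIdx_subset hw hiR
    have hprof : prof hn a i = pinv hn w i := by
      rcases rootIdx_cases hiR with hwi | ⟨j, hwi⟩
      · rw [prof_root_pv hn (hroot.trans hwi), pinv_not_lv hn (by rw [hwi]; simp)]
      · rw [prof_eq_of hn (out_pv_root_lv a (hroot.trans hwi)),
          pinv_lv hn hwi]
    simp [Qc, hiR, hiI, hprof]
  · have hpvne : (bpv i : BV k n) ≠ a.root := by rw [hroot]; exact pv_ne_of_not_rootIdx hiR
    have hgi : gA a i = some (a.out (bpv i)) := gA_eq_some a hpvne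
    have hout : a.out (bpv i) = blv i (prof hn a i) := prof_spec hn hpvne
    have hAB : (∃ u, firstOcc (lsW ord w) i = some u ∧ gA a i = some u)
        ↔ firstOcc (lsW ord w) i = some (blv i (prof hn a i)) := by
      rw [hgi, hout]
      constructor
      · rintro ⟨u, h1, h2⟩
        injection h2 with h2
        rw [h1, h2]
      · intro h
        exact ⟨blv i (prof hn a i), h, rfl⟩
    simp only [Qc, if_neg hiR, Finset.mem_union, Finset.mem_filter, Finset.mem_univ,
      true_and, Finset.notMem_empty, not_false_iff, true_and, hiR, or_false]
    rw [hAB]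
    exact Iff.comm

end BouquetCount2
lemma iter2' {α : Type*} (f : α → α) (x : α) : f^[2] x = f (f x) := by
  rw [show (2 : ℕ) = 1 + 1 from rfl, Function.iterate_add_apply, Function.iterate_one]

lemma iter3' {α : Type*} (f : α → α) (x : α) : f^[3] x = f (f (f x)) := by
  rw [show (3 : ℕ) = 1 + 2 from rfl, Function.iterate_add_apply, iter2',
    Function.iterate_one]

lemma iter4' {α : Type*} (f : α → α) (x : α) : f^[4] x = f (f (f (f x))) := by
  rw [show (4 : ℕ) = 1 + 3 from rfl, Function.iterate_add_apply, iter3',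
    Function.iterate_one]

section BouquetCount3
variable [Fintype (BV k n)]

/-- the out-map of the tree built from a root and a profile -/
def mkOut (w : BV k n) (c : ∀ i, Fin (n i)) : BV k n → BV k n := fun u =>
  match u with
  | Sum.inl none =>
    match w with
    | Sum.inl none => bv0
    | Sum.inl (some i) => bpv i
    | Sum.inr ⟨i, _⟩ => bpv i
  | Sum.inl (some i) => if bpv i = w then w else blv i (c i)
  | Sum.inr ⟨i, j⟩ => if blv i j = w then w else bv0

/-- the tree built from a root and a profile -/
def mkTree (w : BV k n) (c : ∀ i, Fin (n i))
    (hcr : ∀ i (j : Fin (n i)), w = blv i j → c i = j) : SpTree (BE k n) where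
  root := w
  out := mkOut w c
  out_root := by
    rcases w with (_ | i0) | ⟨i0, j0⟩
    · rfl
    · simp [mkOut]
    · simp [mkOut]
  edge_mem := by
    intro v hv
    match v with
    | Sum.inl none =>
      rcases hw : w with (_ | i0) | ⟨i0, j0⟩
      · exact absurd hw.symm hv
      · subst hw
        exact BE_0p i0
      · subst hw
        exact BE_0p i0
    | Sum.inl (some i) =>
      show BE k n (bpv i) (mkOut w c (bpv i))
      have hne : ¬ (bpv i : BV k n) = w := hv
      have : mkOut w c (bpv i) = blv i (c i) := by simp [mkOut, hne]
      rw [this]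
      exact BE_pl i (c i)
    | Sum.inr ⟨i, j⟩ =>
      show BE k n (blv i j) (mkOut w c (blv i j))
      have hne : ¬ (blv i j : BV k n) = w := hv
      have : mkOut w c (blv i j) = bv0 := by simp [mkOut, hne]
      rw [this]
      exact BE_lv0 i j
  reach := by
    intro v
    rcases hw : w with (_ | i0) | ⟨i0, j0⟩
    · subst hw
      match v with
      | Sum.inl none => exact ⟨0, rfl⟩
      | Sum.inl (some i) =>
        refine ⟨2, ?_⟩
        rw [iter2']
        simp [mkOut]
      | Sum.inr ⟨i, j⟩ =>
        refine ⟨1, ?_⟩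
        rw [Function.iterate_one]
        simp [mkOut]
    · subst hw
      match v with
      | Sum.inl none =>
        refine ⟨1, ?_⟩
        rw [Function.iterate_one]
        simp [mkOut]
      | Sum.inl (some i) =>
        rcases eq_or_ne i i0 with rfl | hne
        · exact ⟨0, rfl⟩
        · refine ⟨3, ?_⟩
          rw [iter3']
          simp [mkOut, hne]
      | Sum.inr ⟨i, j⟩ =>
        refine ⟨2, ?_⟩
        rw [iter2']
        simp [mkOut]
    · have hc0 : c i0 = j0 := hcr i0 j0 hw
      subst hw
      match v with
      | Sum.inl none =>
        refine ⟨2, ?_⟩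
        rw [iter2']
        simp [mkOut, hc0]
      | Sum.inl (some i) =>
        rcases eq_or_ne i i0 with rfl | hne
        · refine ⟨1, ?_⟩
          rw [Function.iterate_one]
          simp [mkOut, hc0]
        · refine ⟨4, ?_⟩
          rw [iter4']
          simp [mkOut, hne, hc0]
      | Sum.inr ⟨i, j⟩ =>
        by_cases heq : (blv i j : BV k n) = blv i0 j0
        · exact ⟨0, heq⟩
        · refine ⟨3, ?_⟩
          rw [iter3']
          simp [mkOut, heq, hc0]

variable (ord : LinearOrder (BV k n))

lemma prof_mkTree (hn : ∀ i, 1 ≤ n i) (w : BV k n) (I : Finset (Fin k))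
    (c : ∀ i, Fin (n i)) (hcr : ∀ i (j : Fin (n i)), w = blv i j → c i = j)
    (hq : ∀ i, Qc ord hn w I i (c i)) : prof hn (mkTree w c hcr) = c := by
  funext i
  by_cases hpw : (bpv i : BV k n) = w
  · have h1 : prof hn (mkTree w c hcr) i = ⟨0, hn i⟩ :=
      prof_root_pv hn (show (mkTree w c hcr).root = bpv i from hpw.symm)
    have hiR : i ∈ rootIdx w := by rw [← hpw]; simp [rootIdx]
    have h2 := hq i
    simp only [Qc, if_pos hiR] at h2
    have h3 : pinv hn w i = ⟨0, hn i⟩ := by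
      refine pinv_not_lv hn ?_
      rw [← hpw]
      rintro ⟨j, hj⟩
      exact absurd hj (by simp)
    rw [h1, h2, h3]
  · have hout : (mkTree w c hcr).out (bpv i) = blv i (c i) := by
      show mkOut w c (bpv i) = _
      simp [mkOut, hpw]
    exact prof_eq_of hn hout

lemma mkTree_prof (hn : ∀ i, 1 ≤ n i) (w : BV k n) (a : SpTree (BE k n))
    (hroot : a.root = w)
    (hcr : ∀ i (j : Fin (n i)), w = blv i j → prof hn a i = j) :
    mkTree w (prof hn a) hcr = a := by
  refine SpTree.ext' hroot.symm ?_
  funext v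
  match v with
  | Sum.inl none =>
    show mkOut w (prof hn a) bv0 = a.out bv0
    rcases hw : w with (_ | i0) | ⟨i0, j0⟩
    · subst hw
      have h0 := a.out_root
      rw [hroot] at h0
      rw [h0]
      rfl
    · subst hw
      rw [out_v0_root_pv a hroot]
      rfl
    · subst hw
      rw [out_v0_root_lv a hroot]
      rfl
  | Sum.inl (some i) =>
    show mkOut w (prof hn a) (bpv i) = a.out (bpv i)
    by_cases hpw : (bpv i : BV k n) = w
    · have h1 : mkOut w (prof hn a) (bpv i) = w := by simp [mkOut, hpw]
      have h0 := a.out_root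
      rw [hroot, ← hpw] at h0
      rw [h1, h0, hpw]
    · have h1 : mkOut w (prof hn a) (bpv i) = blv i (prof hn a i) := by
        simp [mkOut, hpw]
      rw [h1]
      exact (prof_spec hn (by rw [hroot]; exact hpw)).symm
  | Sum.inr ⟨i, j⟩ =>
    show mkOut w (prof hn a) (blv i j) = a.out (blv i j)
    by_cases hlw : (blv i j : BV k n) = w
    · have h1 : mkOut w (prof hn a) (blv i j) = w := by simp [mkOut, hlw]
      have h0 := a.out_root
      rw [hroot, ← hlw] at h0
      rw [h1, h0, hlw]
    · have h1 : mkOut w (prof hn a) (blv i j) = bv0 := by simp [mkOut, hlw]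
      rw [h1]
      exact (out_leaf a (by rw [hroot]; exact hlw)).symm

lemma Qc_root_coord (hn : ∀ i, 1 ≤ n i) {w : BV k n} {I : Finset (Fin k)}
    {c : ∀ i, Fin (n i)} (hq : ∀ i, Qc ord hn w I i (c i)) :
    ∀ i (j : Fin (n i)), w = blv i j → c i = j := by
  intro i j hw
  have hiR : i ∈ rootIdx w := by rw [hw]; simp [rootIdx]
  have h2 := hq i
  simp only [Qc, if_pos hiR] at h2
  rw [h2, pinv_lv hn hw]

/-- the equivalence between trees and admissible profiles -/
noncomputable def treeEquiv (hn : ∀ i, 1 ≤ n i) (w : BV k n) (I : Finset (Fin k)) :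
    {a : SpTree (BE k n) // a.root = w ∧ ∀ i, Qc ord hn w I i (prof hn a i)} ≃
      {c : ∀ i, Fin (n i) // ∀ i, Qc ord hn w I i (c i)} where
  toFun a := ⟨prof hn a.1, a.2.2⟩
  invFun c := ⟨mkTree w c.1 (Qc_root_coord ord hn c.2), rfl, by
    rw [prof_mkTree ord hn w I c.1 (Qc_root_coord ord hn c.2) c.2]
    exact c.2⟩
  left_inv := by
    rintro ⟨a, h1, h2⟩
    refine Subtype.ext ?_
    exact mkTree_prof hn w a h1 (Qc_root_coord ord hn h2)
  right_inv := by
    rintro ⟨c, hc⟩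
    refine Subtype.ext ?_
    exact prof_mkTree ord hn w I c (Qc_root_coord ord hn hc) hc

lemma count_WI (hn : ∀ i, 1 ≤ n i) (I : Finset (Fin k)) (w : BV k n)
    (hw : w ∈ WI k n I) :
    multCount (BE k n) ord (WI k n I) w = ∏ i ∈ Iᶜ, (n i - 1) := by
  have e1 : {a : SpTree (BE k n) // a.root = w ∧ expPsi ord a = WI k n I} ≃
      {c : ∀ i, Fin (n i) // ∀ i, Qc ord hn w I i (c i)} := by
    refine (Equiv.subtypeEquivRight ?_).trans (treeEquiv ord hn w I)
    intro a
    constructor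
    · rintro ⟨h1, h2⟩
      exact ⟨h1, (cond_iff ord hn I w hw a h1).mp h2⟩
    · rintro ⟨h1, h2⟩
      exact ⟨h1, (cond_iff ord hn I w hw a h1).mpr h2⟩
  unfold multCount
  rw [Nat.card_congr (e1.trans Equiv.subtypePiEquivPi), Nat.card_pi]
  have hfac : ∀ i : Fin k, Nat.card {x : Fin (n i) // Qc ord hn w I i x}
      = if i ∈ I then 1 else n i - 1 := by
    intro i
    rw [Nat.card_eq_fintype_card]
    by_cases hiR : i ∈ rootIdx w
    · rw [if_pos (rootIdx_subset hw hiR)]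
      have hQ : ∀ x : Fin (n i), Qc ord hn w I i x ↔ x = pinv hn w i := by
        intro x
        simp [Qc, hiR]
      rw [Fintype.card_congr (Equiv.subtypeEquivRight hQ)]
      exact Fintype.card_subtype_eq _
    · obtain ⟨u, hfind⟩ : ∃ u, firstOcc (lsW ord w) i = some u := by
        rw [← Option.isSome_iff_exists]
        unfold firstOcc
        rw [List.find?_isSome]
        refine ⟨blv i ⟨0, hn i⟩, ?_, by simp [petOf]⟩
        refine (mem_lsW ord).mpr ⟨⟨i, _, rfl⟩, ?_⟩
        intro h
        apply hiR
        rw [← h]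
        simp [rootIdx]
      have hmem := List.mem_of_find?_eq_some hfind
      have hpet : petOf u = some i := by
        have := List.find?_some hfind
        simpa using this
      obtain ⟨⟨i2, j2, rfl⟩, -⟩ := (mem_lsW ord).mp hmem
      have : i2 = i := by simpa [petOf] using hpet
      subst this
      have hQ : ∀ x : Fin (n i2), Qc ord hn w I i2 x ↔ (i2 ∈ I ↔ x = j2) := by
        intro x
        simp only [Qc, if_neg hiR, hfind, Option.some.injEq]
        constructor
        · intro h
          rw [h]
          constructor
          · intro h2
            exact blv_inj h2.symm
          · rintro rfl
            rfl
        · intro h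
          rw [h]
          constructor
          · rintro rfl
            rfl
          · intro h2
            exact blv_inj h2.symm
      by_cases hiI : i2 ∈ I
      · rw [if_pos hiI]
        have hQ' : ∀ x : Fin (n i2), Qc ord hn w I i2 x ↔ x = j2 := by
          intro x
          rw [hQ x]
          simp [hiI]
        rw [Fintype.card_congr (Equiv.subtypeEquivRight hQ')]
        exact Fintype.card_subtype_eq _
      · rw [if_neg hiI]
        have hQ' : ∀ x : Fin (n i2), Qc ord hn w I i2 x ↔ ¬ (x = j2) := by
          intro x
          rw [hQ x]
          simp [hiI]
        rw [Fintype.card_congr (Equiv.subtypeEquivRight hQ')]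
        rw [Fintype.card_subtype_compl, Fintype.card_subtype_eq, Fintype.card_fin]
  rw [Finset.prod_congr rfl (fun i _ => hfac i), Finset.prod_ite, Finset.prod_const_one,
    one_mul]
  refine Finset.prod_congr ?_ (fun _ _ => rfl)
  ext i
  simp

lemma count_zero (hn : ∀ i, 1 ≤ n i) (W : Finset (BV k n))
    (hW : ∀ I, W ≠ WI k n I) (w : BV k n) :
    multCount (BE k n) ord W w = 0 := by
  unfold multCount
  have : IsEmpty {a : SpTree (BE k n) // a.root = w ∧ expPsi ord a = W} := by
    constructor
    rintro ⟨a, -, hpsi⟩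
    exact hW _ (hpsi.symm.trans (expPsi_eq ord a hn))
  exact Nat.card_of_isEmpty

end BouquetCount3

end BouquetProof


/-- In the bouquet graph (with any total ordering of the vertices),
the multiplicity of `W_I` is `m(W_I) = ∏_{i ∉ I} (n_i − 1)` for every
`I ⊆ {1,…,k}`, and `m(W) = 0` for every strongly connected subset `W` of the
vertices which is not of the form `W_I`. -/
theorem statement19 (k : ℕ) (hk : 1 ≤ k) (n : Fin k → ℕ) (hn : ∀ i, 1 ≤ n i)
    (ord : LinearOrder (BV k n)) :
    (∀ I : Finset (Fin k), ∀ w ∈ WI k n I,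
        multCount (BE k n) ord (WI k n I) w = ∏ i ∈ Iᶜ, (n i - 1)) ∧
    (∀ W : Finset (BV k n), W.Nonempty → SConn (BE k n) ↑W →
        (∀ I : Finset (Fin k), W ≠ WI k n I) →
        ∀ w ∈ W, multCount (BE k n) ord W w = 0) := by
  constructor
  · intro I w hw
    exact count_WI ord hn I w hw
  · intro W hW hSC hne w hwW
    exact count_zero ord hn W hne w
end
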